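/- arXiv:1308.6539 — 6 statements merged into one kernel-verified Lean document; each statement's English description precedes it below -/
import Mathlib

section
/- Let f be a hyperbolic homeomorphism of a compact metric space (M,d) with contraction rate λ > 0, and let A: M → GL(d,ℝ) be Lipschitz continuous satisfying the fiber bunching condition: there exist C₃ > 0 and 0 < θ < λ such that ‖Aⁿ(x)‖·‖Aⁿ(x)⁻¹‖ ≤ C₃e^{θn} for all x ∈ M and n ≥ 0. Then there exists a constant C > 0 (depending only on A and f) such that for every x ∈ M and all y, z in the local stable set W^s_ε(x), one has ‖Aⁿ(y)‖·‖Aⁿ(z)⁻¹‖ ≤ C e^{nθ} for all n ≥ 0. -/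
open Filter Topology Metric Matrix
open scoped Matrix.Norms.L2Operator
noncomputable section
set_option maxHeartbeats 1000000

def cocycle {M G : Type*} [Group G] (f : M → M) (A : M → G) : ℕ → M → G
  | 0, _ => 1
  | n + 1, x => A (f^[n] x) * cocycle f A n x

def zcocycle {M G : Type*} [Group G] (f : M ≃ M) (A : M → G) : ℤ → M → G
  | Int.ofNat m, x => cocycle (⇑f) A m x
  | Int.negSucc m, x => (cocycle (⇑f) A (m + 1) ((⇑f.symm)^[m + 1] x))⁻¹

def zit {M : Type*} (f : M ≃ M) : ℤ → M → M
  | Int.ofNat m, x => (⇑f)^[m] x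
  | Int.negSucc m, x => (⇑f.symm)^[m + 1] x

def gnorm {d : ℕ} (g : GL (Fin d) ℝ) : ℝ := ‖(g : Matrix (Fin d) (Fin d) ℝ)‖

def stableSet {M : Type*} [PseudoMetricSpace M] (f : M → M) (x : M) : Set M :=
  {y | Tendsto (fun n : ℕ => dist (f^[n] x) (f^[n] y)) atTop (𝓝 0)}

def localStable {M : Type*} [PseudoMetricSpace M] (f : M → M) (ε : ℝ) (x : M) : Set M :=
  {y | ∀ n : ℕ, dist (f^[n] x) (f^[n] y) ≤ ε}

structure IsHyperbolic {M : Type*} [MetricSpace M] (f : M ≃ M) (C₁ lam ε τ : ℝ) : Prop where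
  cont : Continuous f
  cont_symm : Continuous f.symm
  C₁_pos : 0 < C₁
  lam_pos : 0 < lam
  eps_pos : 0 < ε
  tau_pos : 0 < τ
  stable_contr : ∀ x y z, y ∈ localStable (⇑f) ε x → z ∈ localStable (⇑f) ε x →
    ∀ n : ℕ, dist ((⇑f)^[n] y) ((⇑f)^[n] z) ≤ C₁ * Real.exp (-lam * n) * dist y z
  unstable_contr : ∀ x y z, y ∈ localStable (⇑f.symm) ε x → z ∈ localStable (⇑f.symm) ε x →
    ∀ n : ℕ, dist ((⇑f.symm)^[n] y) ((⇑f.symm)^[n] z) ≤ C₁ * Real.exp (-lam * n) * dist y z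
  bracket : ∃ br : M → M → M,
    ContinuousOn (fun p : M × M => br p.1 p.2) {p | dist p.1 p.2 < τ} ∧
    ∀ x y, dist x y < τ → localStable (⇑f) ε x ∩ localStable (⇑f.symm) ε y = {br x y}

def FiberBunched {M : Type*} {d : ℕ} (f : M → M) (A : M → GL (Fin d) ℝ) (θ : ℝ) : Prop :=
  ∃ C₃ > (0 : ℝ), ∀ (x : M) (n : ℕ),
    gnorm (cocycle f A n x) * gnorm ((cocycle f A n x)⁻¹) ≤ C₃ * Real.exp (θ * n)

/-! Auxiliary lemmas -/

lemma aux_gnorm_nonneg {d : ℕ} (g : GL (Fin d) ℝ) : 0 ≤ gnorm g := norm_nonneg _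

lemma aux_gnorm_mul_le {d : ℕ} (g h : GL (Fin d) ℝ) : gnorm (g * h) ≤ gnorm g * gnorm h := by
  simp only [gnorm, Units.val_mul]
  exact norm_mul_le _ _

lemma aux_norm_one_le {d : ℕ} : ‖(1 : Matrix (Fin d) (Fin d) ℝ)‖ ≤ 1 := by
  rw [Matrix.cstar_norm_def, _root_.map_one, ContinuousLinearMap.one_def]
  exact ContinuousLinearMap.norm_id_le

lemma aux_geom_sum_le (q : ℝ) (h0 : 0 ≤ q) (h1 : q < 1) (n : ℕ) :
    ∑ k ∈ Finset.range n, q ^ k ≤ (1 - q)⁻¹ := by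
  rw [geom_sum_eq (ne_of_lt h1), inv_eq_one_div, ← neg_div_neg_eq, neg_sub, neg_sub]
  have h2 : 0 < 1 - q := by linarith
  have h3 : 0 ≤ q ^ n := pow_nonneg h0 n
  gcongr
  linarith

lemma aux_inv_mul_expand {d : ℕ} (a b : GL (Fin d) ℝ) :
    ((a⁻¹ : GL (Fin d) ℝ) : Matrix (Fin d) (Fin d) ℝ) * b
      = 1 + ((a⁻¹ : GL (Fin d) ℝ) : Matrix (Fin d) (Fin d) ℝ)
        * ((b : Matrix (Fin d) (Fin d) ℝ) - a) := by
  have ha : ((a⁻¹ : GL (Fin d) ℝ) : Matrix (Fin d) (Fin d) ℝ) * a = 1 := by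
    rw [← Units.val_mul, inv_mul_cancel, Units.val_one]
  rw [mul_sub, ha]
  abel

lemma aux_norm4 {R : Type*} [NormedRing R] (x y z w : R) :
    ‖x * (y * (z * w))‖ ≤ ‖x‖ * (‖y‖ * (‖z‖ * ‖w‖)) := by
  refine le_trans (norm_mul_le _ _) ?_
  refine mul_le_mul_of_nonneg_left (le_trans (norm_mul_le _ _) ?_) (norm_nonneg _)
  exact mul_le_mul_of_nonneg_left (norm_mul_le _ _) (norm_nonneg _)

theorem stmt0 {M : Type*} [MetricSpace M] [CompactSpace M] {d : ℕ}
    (f : M ≃ M) (C₁ lam ε τ : ℝ) (hf : IsHyperbolic f C₁ lam ε τ)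
    (A : M → GL (Fin d) ℝ)
    (hA : ∃ K : NNReal, LipschitzWith K fun x => (A x : Matrix (Fin d) (Fin d) ℝ))
    (θ : ℝ) (hθ0 : 0 < θ) (hθ : θ < lam) (hFB : FiberBunched (⇑f) A θ) :
    ∃ C > (0 : ℝ), ∀ x : M, ∀ y ∈ localStable (⇑f) ε x, ∀ z ∈ localStable (⇑f) ε x, ∀ n : ℕ,
      gnorm (cocycle (⇑f) A n y) * gnorm ((cocycle (⇑f) A n z)⁻¹) ≤ C * Real.exp (θ * n) := by
  obtain ⟨C₃, hC₃, hFB⟩ := hFB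
  obtain ⟨K, hK⟩ := hA
  rcases isEmpty_or_nonempty M with hM | hM
  · exact ⟨1, one_pos, fun x => (IsEmpty.false x).elim⟩
  rcases Nat.eq_zero_or_pos d with hd | hd
  · subst hd
    refine ⟨1, one_pos, fun x y hy z hz n => ?_⟩
    have h1 : gnorm (cocycle (⇑f) A n y) = 0 := by
      have : ((cocycle (⇑f) A n y : GL (Fin 0) ℝ) : Matrix (Fin 0) (Fin 0) ℝ) = 0 :=
        Subsingleton.elim _ _
      rw [gnorm, this, norm_zero]
    rw [h1, zero_mul, one_mul]
    positivity
  -- now d > 0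
  have hcoc1 : ∀ w : M, cocycle (⇑f) A 1 w = A w := by
    intro w; simp [cocycle]
  -- minimum of ‖A x‖
  have hcont : Continuous fun x : M => ‖(A x : Matrix (Fin d) (Fin d) ℝ)‖ :=
    hK.continuous.norm
  obtain ⟨x₀, -, hx₀⟩ := isCompact_univ.exists_isMinOn Set.univ_nonempty hcont.continuousOn
  set m : ℝ := ‖(A x₀ : Matrix (Fin d) (Fin d) ℝ)‖ with hm_def
  have hm : 0 < m := by
    rw [hm_def, norm_pos_iff]
    intro h
    have h1 : ((A x₀ * (A x₀)⁻¹ : GL (Fin d) ℝ) : Matrix (Fin d) (Fin d) ℝ) = 1 := by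
      rw [mul_inv_cancel, Units.val_one]
    rw [Units.val_mul, h, zero_mul] at h1
    have h2 : (1 : Matrix (Fin d) (Fin d) ℝ) ⟨0, hd⟩ ⟨0, hd⟩ = 1 := Matrix.one_apply_eq _
    rw [← h1] at h2
    simp at h2
  have hxmin : ∀ w : M, m ≤ ‖(A w : Matrix (Fin d) (Fin d) ℝ)‖ :=
    fun w => hx₀ (Set.mem_univ w)
  set Minv : ℝ := C₃ * Real.exp θ / m with hMinv_def
  have hMinv_pos : 0 < Minv := by
    rw [hMinv_def]; positivity
  have hMinv : ∀ w : M, gnorm ((A w)⁻¹) ≤ Minv := by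
    intro w
    have h1 := hFB w 1
    rw [hcoc1 w] at h1
    rw [hMinv_def, le_div_iff₀ hm]
    have h2 := hxmin w
    have h3 : (0:ℝ) ≤ gnorm ((A w)⁻¹) := aux_gnorm_nonneg _
    have h4 : gnorm (A w) = ‖(A w : Matrix (Fin d) (Fin d) ℝ)‖ := rfl
    have h5 : Real.exp (θ * (1:ℕ)) = Real.exp θ := by norm_num
    rw [h5] at h1
    nlinarith
  set q : ℝ := Real.exp (θ - lam) with hq_def
  have hq0 : 0 < q := Real.exp_pos _
  have hq1 : q < 1 := by
    rw [hq_def, Real.exp_lt_one_iff]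
    linarith
  set B : ℝ := C₃ * (Minv * ((K : ℝ) * (C₁ * ε))) with hB_def
  have hB : 0 ≤ B := by
    rw [hB_def]
    have := hf.C₁_pos
    have := hf.eps_pos
    positivity
  set K₀ : ℝ := Real.exp (B * (1 - q)⁻¹) with hK₀_def
  have hK₀ : 0 < K₀ := Real.exp_pos _
  -- key holonomy bound
  have key : ∀ u v : M, v ∈ localStable (⇑f) ε u → ∀ n : ℕ,
      gnorm ((cocycle (⇑f) A n u)⁻¹ * cocycle (⇑f) A n v) ≤ K₀ := by
    intro u v hv
    have hu : u ∈ localStable (⇑f) ε u := fun k => by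
      simp [le_of_lt hf.eps_pos]
    have hduv : dist u v ≤ ε := by simpa using hv 0
    have hdist : ∀ k : ℕ, dist ((⇑f)^[k] u) ((⇑f)^[k] v) ≤ C₁ * Real.exp (-lam * k) * ε := by
      intro k
      have h1 := hf.stable_contr u u v hu hv k
      have h3 : 0 ≤ C₁ * Real.exp (-lam * k) := by
        have := hf.C₁_pos; positivity
      nlinarith [dist_nonneg (x := u) (y := v)]
    have main : ∀ n : ℕ, gnorm ((cocycle (⇑f) A n u)⁻¹ * cocycle (⇑f) A n v)
        ≤ Real.exp (B * ∑ k ∈ Finset.range n, q ^ k) := by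
      intro n
      induction n with
      | zero =>
        have h1 : ((cocycle (⇑f) A 0 u)⁻¹ * cocycle (⇑f) A 0 v) = 1 := by
          simp [cocycle]
        rw [h1]
        have : gnorm (1 : GL (Fin d) ℝ) ≤ 1 := by
          rw [gnorm, Units.val_one]; exact aux_norm_one_le
        simpa using this
      | succ n ih =>
        set cu := cocycle (⇑f) A n u with hcu_def
        set cv := cocycle (⇑f) A n v with hcv_def
        set a := A ((⇑f)^[n] u) with ha_def
        set b := A ((⇑f)^[n] v) with hb_def
        have hc1 : cocycle (⇑f) A (n+1) u = a * cu := rfl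
        have hc2 : cocycle (⇑f) A (n+1) v = b * cv := rfl
        -- matrix identity
        have hmain : (((cocycle (⇑f) A (n+1) u)⁻¹ * cocycle (⇑f) A (n+1) v : GL (Fin d) ℝ) :
              Matrix (Fin d) (Fin d) ℝ)
            = ((cu⁻¹ * cv : GL (Fin d) ℝ) : Matrix (Fin d) (Fin d) ℝ)
              + ((cu⁻¹ : GL (Fin d) ℝ) : Matrix (Fin d) (Fin d) ℝ)
                * (((a⁻¹ : GL (Fin d) ℝ) : Matrix (Fin d) (Fin d) ℝ)
                  * ((((b : Matrix (Fin d) (Fin d) ℝ) - a)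
                    * ((cv : GL (Fin d) ℝ) : Matrix (Fin d) (Fin d) ℝ)))) := by
          rw [hc1, hc2, _root_.mul_inv_rev]
          have h1 : (((cu⁻¹ * a⁻¹) * (b * cv) : GL (Fin d) ℝ) : Matrix (Fin d) (Fin d) ℝ)
              = ((cu⁻¹ : GL (Fin d) ℝ) : Matrix (Fin d) (Fin d) ℝ)
                * ((((a⁻¹ : GL (Fin d) ℝ) : Matrix (Fin d) (Fin d) ℝ)
                  * ((b : GL (Fin d) ℝ) : Matrix (Fin d) (Fin d) ℝ))
                  * ((cv : GL (Fin d) ℝ) : Matrix (Fin d) (Fin d) ℝ)) := by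
            simp [Units.val_mul, mul_assoc]
          rw [h1, aux_inv_mul_expand a b]
          rw [add_mul, one_mul, mul_add, Units.val_mul]
          rw [mul_assoc]
        -- norm bound via the identity
        have hnorm : gnorm ((cocycle (⇑f) A (n+1) u)⁻¹ * cocycle (⇑f) A (n+1) v)
            ≤ gnorm (cu⁻¹ * cv)
              + gnorm cu⁻¹ * (gnorm a⁻¹
                * (‖(b : Matrix (Fin d) (Fin d) ℝ) - a‖
                  * ‖((cv : GL (Fin d) ℝ) : Matrix (Fin d) (Fin d) ℝ)‖)) := by
          rw [gnorm, hmain]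
          refine le_trans (norm_add_le _ _) ?_
          exact add_le_add le_rfl (aux_norm4 _ _ _ _)
        -- bound each factor
        have hbnd_ba : ‖(b : Matrix (Fin d) (Fin d) ℝ) - a‖
            ≤ (K : ℝ) * (C₁ * Real.exp (-lam * n) * ε) := by
          have h1 := hK.dist_le_mul ((⇑f)^[n] v) ((⇑f)^[n] u)
          rw [dist_eq_norm] at h1
          have h2 : dist ((⇑f)^[n] v) ((⇑f)^[n] u) ≤ C₁ * Real.exp (-lam * n) * ε := by
            rw [dist_comm]; exact hdist n
          have hKnn : (0:ℝ) ≤ (K : ℝ) := K.coe_nonneg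
          calc ‖(b : Matrix (Fin d) (Fin d) ℝ) - a‖
              ≤ (K : ℝ) * dist ((⇑f)^[n] v) ((⇑f)^[n] u) := h1
            _ ≤ (K : ℝ) * (C₁ * Real.exp (-lam * n) * ε) :=
                mul_le_mul_of_nonneg_left h2 hKnn
        have hbnd_cv : ‖((cv : GL (Fin d) ℝ) : Matrix (Fin d) (Fin d) ℝ)‖
            ≤ gnorm cu * gnorm (cu⁻¹ * cv) := by
          have h1 : cv = cu * (cu⁻¹ * cv) := (mul_inv_cancel_left _ _).symm
          calc ‖((cv : GL (Fin d) ℝ) : Matrix (Fin d) (Fin d) ℝ)‖ = gnorm cv := rfl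
            _ = gnorm (cu * (cu⁻¹ * cv)) := by rw [← h1]
            _ ≤ gnorm cu * gnorm (cu⁻¹ * cv) := aux_gnorm_mul_le _ _
        have hFBu : gnorm cu * gnorm cu⁻¹ ≤ C₃ * Real.exp (θ * n) := hFB u n
        have hMa : gnorm a⁻¹ ≤ Minv := hMinv _
        -- put everything together
        have hGn : 0 ≤ gnorm (cu⁻¹ * cv) := aux_gnorm_nonneg _
        have hgcu : 0 ≤ gnorm cu := aux_gnorm_nonneg _
        have hgcui : 0 ≤ gnorm cu⁻¹ := aux_gnorm_nonneg _
        have hgai : 0 ≤ gnorm a⁻¹ := aux_gnorm_nonneg _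
        have hKnn : (0:ℝ) ≤ (K : ℝ) := K.coe_nonneg
        have hC₁ : 0 < C₁ := hf.C₁_pos
        have hε : 0 < ε := hf.eps_pos
        have hexp1 : 0 < Real.exp (-lam * n) := Real.exp_pos _
        have hextra : gnorm cu⁻¹ * (gnorm a⁻¹
              * (‖(b : Matrix (Fin d) (Fin d) ℝ) - a‖
                * ‖((cv : GL (Fin d) ℝ) : Matrix (Fin d) (Fin d) ℝ)‖))
            ≤ B * q ^ n * gnorm (cu⁻¹ * cv) := by
          have step1 : gnorm cu⁻¹ * (gnorm a⁻¹
                * (‖(b : Matrix (Fin d) (Fin d) ℝ) - a‖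
                  * ‖((cv : GL (Fin d) ℝ) : Matrix (Fin d) (Fin d) ℝ)‖))
              ≤ gnorm cu⁻¹ * (Minv * (((K : ℝ) * (C₁ * Real.exp (-lam * n) * ε))
                * (gnorm cu * gnorm (cu⁻¹ * cv)))) := by
            gcongr
          refine le_trans step1 ?_
          have heq : gnorm cu⁻¹ * (Minv * (((K : ℝ) * (C₁ * Real.exp (-lam * n) * ε))
                * (gnorm cu * gnorm (cu⁻¹ * cv))))
              = (gnorm cu * gnorm cu⁻¹) * Real.exp (-lam * n)
                * (Minv * ((K : ℝ) * (C₁ * ε))) * gnorm (cu⁻¹ * cv) := by ring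
          rw [heq]
          have step2 : (gnorm cu * gnorm cu⁻¹) * Real.exp (-lam * n)
                * (Minv * ((K : ℝ) * (C₁ * ε))) * gnorm (cu⁻¹ * cv)
              ≤ (C₃ * Real.exp (θ * n)) * Real.exp (-lam * n)
                * (Minv * ((K : ℝ) * (C₁ * ε))) * gnorm (cu⁻¹ * cv) := by
            gcongr
          refine le_trans step2 (le_of_eq ?_)
          have hqn : Real.exp (θ * n) * Real.exp (-lam * n) = q ^ n := by
            rw [hq_def, ← Real.exp_nat_mul, ← Real.exp_add]
            ring_nf
          rw [hB_def, ← hqn]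
          ring
        have hstep : gnorm ((cocycle (⇑f) A (n+1) u)⁻¹ * cocycle (⇑f) A (n+1) v)
            ≤ gnorm (cu⁻¹ * cv) * (1 + B * q ^ n) := by
          calc gnorm ((cocycle (⇑f) A (n+1) u)⁻¹ * cocycle (⇑f) A (n+1) v)
              ≤ gnorm (cu⁻¹ * cv) + gnorm cu⁻¹ * (gnorm a⁻¹
                * (‖(b : Matrix (Fin d) (Fin d) ℝ) - a‖
                  * ‖((cv : GL (Fin d) ℝ) : Matrix (Fin d) (Fin d) ℝ)‖)) := hnorm
            _ ≤ gnorm (cu⁻¹ * cv) + B * q ^ n * gnorm (cu⁻¹ * cv) :=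
                add_le_add le_rfl hextra
            _ = gnorm (cu⁻¹ * cv) * (1 + B * q ^ n) := by ring
        have hone : 1 + B * q ^ n ≤ Real.exp (B * q ^ n) := by
          have := Real.add_one_le_exp (B * q ^ n)
          linarith
        calc gnorm ((cocycle (⇑f) A (n+1) u)⁻¹ * cocycle (⇑f) A (n+1) v)
            ≤ gnorm (cu⁻¹ * cv) * (1 + B * q ^ n) := hstep
          _ ≤ Real.exp (B * ∑ k ∈ Finset.range n, q ^ k) * Real.exp (B * q ^ n) := by
              apply mul_le_mul ih hone (by positivity) (le_of_lt (Real.exp_pos _))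
          _ = Real.exp (B * ∑ k ∈ Finset.range (n+1), q ^ k) := by
              rw [← Real.exp_add, Finset.sum_range_succ]
              congr 1
              ring
    intro n
    refine le_trans (main n) ?_
    rw [hK₀_def]
    apply Real.exp_le_exp.mpr
    exact mul_le_mul_of_nonneg_left (aux_geom_sum_le q (le_of_lt hq0) hq1 n) hB
  -- conclusion
  refine ⟨K₀ * K₀ * C₃, by positivity, ?_⟩
  intro x y hy z hz n
  have hxz : x ∈ localStable (⇑f) ε z := fun k => by
    rw [dist_comm]; exact hz k
  have h1 : gnorm (cocycle (⇑f) A n y) ≤ gnorm (cocycle (⇑f) A n x) * K₀ := by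
    have e1 : cocycle (⇑f) A n y
        = cocycle (⇑f) A n x * ((cocycle (⇑f) A n x)⁻¹ * cocycle (⇑f) A n y) :=
      (mul_inv_cancel_left _ _).symm
    calc gnorm (cocycle (⇑f) A n y)
        = gnorm (cocycle (⇑f) A n x * ((cocycle (⇑f) A n x)⁻¹ * cocycle (⇑f) A n y)) := by
          rw [← e1]
      _ ≤ gnorm (cocycle (⇑f) A n x) * gnorm ((cocycle (⇑f) A n x)⁻¹ * cocycle (⇑f) A n y) :=
          aux_gnorm_mul_le _ _
      _ ≤ gnorm (cocycle (⇑f) A n x) * K₀ :=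
          mul_le_mul_of_nonneg_left (key x y hy n) (aux_gnorm_nonneg _)
  have h2 : gnorm ((cocycle (⇑f) A n z)⁻¹) ≤ K₀ * gnorm ((cocycle (⇑f) A n x)⁻¹) := by
    have e2 : (cocycle (⇑f) A n z)⁻¹
        = ((cocycle (⇑f) A n z)⁻¹ * cocycle (⇑f) A n x) * (cocycle (⇑f) A n x)⁻¹ :=
      (mul_inv_cancel_right _ _).symm
    calc gnorm ((cocycle (⇑f) A n z)⁻¹)
        = gnorm (((cocycle (⇑f) A n z)⁻¹ * cocycle (⇑f) A n x) * (cocycle (⇑f) A n x)⁻¹) := by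
          rw [← e2]
      _ ≤ gnorm ((cocycle (⇑f) A n z)⁻¹ * cocycle (⇑f) A n x) * gnorm ((cocycle (⇑f) A n x)⁻¹) :=
          aux_gnorm_mul_le _ _
      _ ≤ K₀ * gnorm ((cocycle (⇑f) A n x)⁻¹) :=
          mul_le_mul_of_nonneg_right (key z x hxz n) (aux_gnorm_nonneg _)
  calc gnorm (cocycle (⇑f) A n y) * gnorm ((cocycle (⇑f) A n z)⁻¹)
      ≤ (gnorm (cocycle (⇑f) A n x) * K₀) * (K₀ * gnorm ((cocycle (⇑f) A n x)⁻¹)) := by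
        apply mul_le_mul h1 h2 (aux_gnorm_nonneg _)
        exact mul_nonneg (aux_gnorm_nonneg _) (le_of_lt hK₀)
    _ = (K₀ * K₀) * (gnorm (cocycle (⇑f) A n x) * gnorm ((cocycle (⇑f) A n x)⁻¹)) := by ring
    _ ≤ (K₀ * K₀) * (C₃ * Real.exp (θ * n)) := by
        apply mul_le_mul_of_nonneg_left (hFB x n)
        positivity
    _ = K₀ * K₀ * C₃ * Real.exp (θ * n) := by ring
end
end

section
/- Let f be a hyperbolic homeomorphism of a compact metric space M and A: M → GL(d,ℝ) a Lipschitz map satisfying the fiber bunching condition with exponent θ < λ. Then for every x ∈ M and y, z ∈ W^s(x) the limit H^{s,A}_{yz} = lim_{n→∞} Aⁿ(z)⁻¹Aⁿ(y) exists in GL(d,ℝ). -/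
open Filter Topology Metric Matrix
open scoped Matrix.Norms.L2Operator
noncomputable section

namespace SHAux

lemma norm_one_le (d : ℕ) : ‖(1 : Matrix (Fin d) (Fin d) ℝ)‖ ≤ 1 := by
  rw [Matrix.cstar_norm_def, _root_.map_one, ContinuousLinearMap.one_def]
  exact ContinuousLinearMap.norm_id_le

lemma coc_succ {M : Type*} {d : ℕ} (f : M → M) (A : M → GL (Fin d) ℝ) (n : ℕ) (x : M) :
    cocycle f A (n + 1) x = A (f^[n] x) * cocycle f A n x := rfl

lemma coc_zero {M : Type*} {d : ℕ} (f : M → M) (A : M → GL (Fin d) ℝ) (x : M) :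
    cocycle f A 0 x = 1 := rfl

lemma key {M : Type*} [MetricSpace M] [CompactSpace M] {d : ℕ} (hd : 0 < d)
    (f : M → M) (A : M → GL (Fin d) ℝ) (K : NNReal)
    (hK : LipschitzWith K fun x => (A x : Matrix (Fin d) (Fin d) ℝ))
    (θ lam C₃ C : ℝ) (hθlam : θ < lam) (hC₃ : 0 < C₃)
    (hFB : ∀ (x : M) (n : ℕ),
      gnorm (cocycle f A n x) * gnorm ((cocycle f A n x)⁻¹) ≤ C₃ * Real.exp (θ * n))
    (y z : M)
    (hC : ∀ n : ℕ, dist (f^[n] y) (f^[n] z) ≤ C * Real.exp (-lam * n)) :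
    ∃ Hm : Matrix (Fin d) (Fin d) ℝ,
      Tendsto (fun n : ℕ =>
          (((cocycle f A n z)⁻¹ * cocycle f A n y : GL (Fin d) ℝ) :
            Matrix (Fin d) (Fin d) ℝ)) atTop (𝓝 Hm) := by
  have hne : Nonempty (Fin d) := ⟨⟨0, hd⟩⟩
  have hneM : Nonempty M := ⟨y⟩
  have hC0 : 0 ≤ C := by
    have h := hC 0
    simp at h
    exact le_trans dist_nonneg h
  -- minimum of ‖A ·‖
  obtain ⟨w, -, hw⟩ := isCompact_univ.exists_isMinOn (Set.univ_nonempty)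
    (f := fun v : M => ‖(A v : Matrix (Fin d) (Fin d) ℝ)‖) hK.continuous.norm.continuousOn
  have hw : ∀ v : M, ‖(A w : Matrix (Fin d) (Fin d) ℝ)‖ ≤ ‖(A v : Matrix (Fin d) (Fin d) ℝ)‖ :=
    fun v => hw (Set.mem_univ v)
  have hm : 0 < ‖(A w : Matrix (Fin d) (Fin d) ℝ)‖ := by
    rcases (norm_nonneg ((A w : Matrix (Fin d) (Fin d) ℝ))).lt_or_eq with h | h
    · exact h
    · exfalso
      have h0 : (A w : Matrix (Fin d) (Fin d) ℝ) = 0 := by rwa [eq_comm, norm_eq_zero] at h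
      have h1 : (1 : Matrix (Fin d) (Fin d) ℝ) = 0 := by
        calc (1 : Matrix (Fin d) (Fin d) ℝ)
            = (((A w)⁻¹ : GL (Fin d) ℝ) : Matrix (Fin d) (Fin d) ℝ) *
              ((A w : GL (Fin d) ℝ) : Matrix (Fin d) (Fin d) ℝ) := by
              rw [← Units.val_mul, inv_mul_cancel, Units.val_one]
          _ = 0 := by rw [h0, mul_zero]
      exact one_ne_zero h1
  set m : ℝ := ‖(A w : Matrix (Fin d) (Fin d) ℝ)‖ with hm_def
  set Mi : ℝ := C₃ * Real.exp θ / m with hMi_def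
  have hAinv : ∀ v : M, ‖(((A v)⁻¹ : GL (Fin d) ℝ) : Matrix (Fin d) (Fin d) ℝ)‖ ≤ Mi := by
    intro v
    have h1 := hFB v 1
    have e : cocycle f A 1 v = A v := by
      show A (f^[0] v) * cocycle f A 0 v = A v
      simp [coc_zero]
    rw [e] at h1
    unfold gnorm at h1
    simp only [Nat.cast_one, mul_one] at h1
    have hv : m ≤ ‖(A v : Matrix (Fin d) (Fin d) ℝ)‖ := hw v
    rw [hMi_def, le_div_iff₀ hm]
    nlinarith [norm_nonneg (((A v)⁻¹ : GL (Fin d) ℝ) : Matrix (Fin d) (Fin d) ℝ), h1, hv]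
  have hMi0 : 0 ≤ Mi := le_trans (norm_nonneg _) (hAinv y)
  -- sequences
  set Y : ℕ → Matrix (Fin d) (Fin d) ℝ :=
    fun n => ((cocycle f A n y : GL (Fin d) ℝ) : Matrix (Fin d) (Fin d) ℝ) with hY_def
  set Z : ℕ → Matrix (Fin d) (Fin d) ℝ :=
    fun n => ((cocycle f A n z : GL (Fin d) ℝ) : Matrix (Fin d) (Fin d) ℝ) with hZ_def
  set Zi : ℕ → Matrix (Fin d) (Fin d) ℝ :=
    fun n => (((cocycle f A n z)⁻¹ : GL (Fin d) ℝ) : Matrix (Fin d) (Fin d) ℝ) with hZi_def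
  set H : ℕ → Matrix (Fin d) (Fin d) ℝ := fun n => Zi n * Y n with hH_def
  have hZZi : ∀ n, Z n * Zi n = 1 := by
    intro n
    rw [hZ_def, hZi_def]
    rw [← Units.val_mul, mul_inv_cancel, Units.val_one]
  have hYZ : ∀ n, Y n = Z n * H n := by
    intro n
    rw [hH_def, ← mul_assoc, hZZi, one_mul]
  have hHsucc : ∀ n, H (n + 1) - H n =
      Zi n * ((((A (f^[n] z))⁻¹ : GL (Fin d) ℝ) : Matrix (Fin d) (Fin d) ℝ) *
        ((A (f^[n] y) : GL (Fin d) ℝ) : Matrix (Fin d) (Fin d) ℝ) - 1) * Y n := by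
    intro n
    have hy1 : Y (n + 1) = ((A (f^[n] y) : GL (Fin d) ℝ) : Matrix (Fin d) (Fin d) ℝ) * Y n := by
      rw [hY_def]
      simp only [coc_succ, Units.val_mul]
    have hz1 : Zi (n + 1) =
        Zi n * (((A (f^[n] z))⁻¹ : GL (Fin d) ℝ) : Matrix (Fin d) (Fin d) ℝ) := by
      rw [hZi_def]
      simp only [coc_succ, _root_.mul_inv_rev, Units.val_mul]
    rw [hH_def]
    simp only
    rw [hy1, hz1]
    noncomm_ring
  have hFBn : ∀ n, ‖Z n‖ * ‖Zi n‖ ≤ C₃ * Real.exp (θ * n) := fun n => hFB z n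
  set q : ℝ := Real.exp (θ - lam) with hq_def
  have hq0 : 0 < q := Real.exp_pos _
  have hq1 : q < 1 := Real.exp_lt_one_iff.2 (by linarith)
  set c : ℝ := C₃ * (Mi * (K : ℝ) * C) with hc_def
  have hc0 : 0 ≤ c :=
    mul_nonneg hC₃.le (mul_nonneg (mul_nonneg hMi0 K.coe_nonneg) hC0)
  have hdiff : ∀ n, ‖H (n + 1) - H n‖ ≤ c * q ^ n * ‖H n‖ := by
    intro n
    rw [hHsucc n]
    set Ai := (((A (f^[n] z))⁻¹ : GL (Fin d) ℝ) : Matrix (Fin d) (Fin d) ℝ) with hAi_def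
    set Ay := ((A (f^[n] y) : GL (Fin d) ℝ) : Matrix (Fin d) (Fin d) ℝ) with hAy_def
    set Az := ((A (f^[n] z) : GL (Fin d) ℝ) : Matrix (Fin d) (Fin d) ℝ) with hAz_def
    have hE : Ai * Ay - 1 = Ai * (Ay - Az) := by
      have h1 : Ai * Az = 1 := by
        rw [hAi_def, hAz_def, ← Units.val_mul, inv_mul_cancel, Units.val_one]
      rw [mul_sub, h1]
    have hEnorm : ‖Ai * Ay - 1‖ ≤ Mi * ((K : ℝ) * (C * Real.exp (-lam * n))) := by
      rw [hE]
      have h1 : ‖Ay - Az‖ ≤ (K : ℝ) * dist (f^[n] y) (f^[n] z) := by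
        rw [← dist_eq_norm]
        exact hK.dist_le_mul _ _
      calc ‖Ai * (Ay - Az)‖ ≤ ‖Ai‖ * ‖Ay - Az‖ := norm_mul_le _ _
        _ ≤ Mi * ((K : ℝ) * dist (f^[n] y) (f^[n] z)) :=
            mul_le_mul (hAinv _) h1 (norm_nonneg _) hMi0
        _ ≤ Mi * ((K : ℝ) * (C * Real.exp (-lam * n))) :=
            mul_le_mul_of_nonneg_left
              (mul_le_mul_of_nonneg_left (hC n) K.coe_nonneg) hMi0
    have hq' : Real.exp (θ * (n : ℝ)) * Real.exp (-lam * (n : ℝ)) = q ^ n := by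
      rw [hq_def, ← Real.exp_add, ← Real.exp_nat_mul]
      congr 1
      push_cast
      ring
    calc ‖Zi n * (Ai * Ay - 1) * Y n‖
        ≤ ‖Zi n‖ * ‖Ai * Ay - 1‖ * ‖Y n‖ := by
          refine le_trans (norm_mul_le _ _) ?_
          exact mul_le_mul_of_nonneg_right (norm_mul_le _ _) (norm_nonneg _)
      _ ≤ ‖Zi n‖ * ‖Ai * Ay - 1‖ * (‖Z n‖ * ‖H n‖) := by
          refine mul_le_mul_of_nonneg_left ?_ (mul_nonneg (norm_nonneg _) (norm_nonneg _))
          exact (hYZ n ▸ norm_mul_le (Z n) (H n))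
      _ = (‖Z n‖ * ‖Zi n‖) * (‖Ai * Ay - 1‖ * ‖H n‖) := by ring
      _ ≤ (C₃ * Real.exp (θ * n)) *
            ((Mi * ((K : ℝ) * (C * Real.exp (-lam * n)))) * ‖H n‖) := by
          refine mul_le_mul (hFBn n)
            (mul_le_mul_of_nonneg_right hEnorm (norm_nonneg _))
            (mul_nonneg (norm_nonneg _) (norm_nonneg _))
            (mul_nonneg hC₃.le (Real.exp_pos _).le)
      _ = c * q ^ n * ‖H n‖ := by
          rw [hc_def, ← hq']
          ring
  -- boundedness of H
  have hsum : ∀ n, ‖H n‖ ≤ Real.exp (∑ k ∈ Finset.range n, c * q ^ k) := by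
    intro n
    induction n with
    | zero =>
      have h0 : H 0 = 1 := by
        rw [hH_def]
        simp only [hY_def, hZi_def, coc_zero, inv_one, Units.val_one, one_mul]
      rw [h0]
      simpa using norm_one_le d
    | succ n ih =>
      have h1 : ‖H (n + 1)‖ ≤ ‖H n‖ + ‖H (n + 1) - H n‖ := by
        calc ‖H (n + 1)‖ = ‖H n + (H (n + 1) - H n)‖ := by congr 1; abel
          _ ≤ ‖H n‖ + ‖H (n + 1) - H n‖ := norm_add_le _ _
      have h2 := hdiff n
      have h3 : ‖H (n + 1)‖ ≤ ‖H n‖ * (1 + c * q ^ n) := by nlinarith [norm_nonneg (H n)]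
      have h4 : (1 : ℝ) + c * q ^ n ≤ Real.exp (c * q ^ n) := by
        have := Real.add_one_le_exp (c * q ^ n); linarith
      calc ‖H (n + 1)‖ ≤ ‖H n‖ * (1 + c * q ^ n) := h3
        _ ≤ Real.exp (∑ k ∈ Finset.range n, c * q ^ k) * Real.exp (c * q ^ n) :=
            mul_le_mul ih h4
              (by nlinarith [hc0, pow_nonneg hq0.le n]) (Real.exp_pos _).le
        _ = Real.exp (∑ k ∈ Finset.range (n + 1), c * q ^ k) := by
            rw [← Real.exp_add, Finset.sum_range_succ]
  set B : ℝ := Real.exp (c * (1 - q)⁻¹) with hB_def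
  have hHle : ∀ n, ‖H n‖ ≤ B := by
    intro n
    refine le_trans (hsum n) (Real.exp_le_exp.2 ?_)
    rw [← Finset.mul_sum]
    refine mul_le_mul_of_nonneg_left ?_ hc0
    rw [← tsum_geometric_of_lt_one hq0.le hq1]
    exact Summable.sum_le_tsum _ (fun i _ => by positivity) (summable_geometric_of_lt_one hq0.le hq1)
  have hcauchy : CauchySeq H := by
    apply cauchySeq_of_le_geometric q (c * B) hq1
    intro n
    rw [dist_eq_norm, norm_sub_rev]
    calc ‖H (n + 1) - H n‖ ≤ c * q ^ n * ‖H n‖ := hdiff n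
      _ ≤ c * B * q ^ n := by
          nlinarith [hHle n, mul_nonneg hc0 (pow_nonneg hq0.le n), norm_nonneg (H n)]
  obtain ⟨Hm, hHm⟩ := cauchySeq_tendsto_of_complete hcauchy
  refine ⟨Hm, ?_⟩
  have he : (fun n : ℕ =>
      (((cocycle f A n z)⁻¹ * cocycle f A n y : GL (Fin d) ℝ) :
        Matrix (Fin d) (Fin d) ℝ)) = H := by
    funext n
    rw [hH_def]
    simp only [hY_def, hZi_def, Units.val_mul]
  rw [he]
  exact hHm

end SHAux

namespace SHAux

lemma dist_decay {M : Type*} [MetricSpace M] (f : M ≃ M) (C₁ lam ε τ : ℝ)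
    (hf : IsHyperbolic f C₁ lam ε τ) (x y z : M)
    (hy : y ∈ stableSet (⇑f) x) (hz : z ∈ stableSet (⇑f) x) :
    ∃ C > 0, ∀ n : ℕ, dist ((⇑f)^[n] y) ((⇑f)^[n] z) ≤ C * Real.exp (-lam * n) := by
  have hten : Tendsto (fun n : ℕ => dist ((⇑f)^[n] y) ((⇑f)^[n] z)) atTop (𝓝 0) := by
    have hb : ∀ n : ℕ, dist ((⇑f)^[n] y) ((⇑f)^[n] z) ≤
        dist ((⇑f)^[n] x) ((⇑f)^[n] y) + dist ((⇑f)^[n] x) ((⇑f)^[n] z) := fun n =>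
      dist_triangle_left _ _ _
    have hsum := Tendsto.add hy hz
    rw [add_zero] at hsum
    exact squeeze_zero (fun n => dist_nonneg) hb hsum
  obtain ⟨N, hN⟩ := Filter.eventually_atTop.mp (hten.eventually (gt_mem_nhds hf.eps_pos))
  set D : ℝ := ∑ k ∈ Finset.range (N + 1), dist ((⇑f)^[k] y) ((⇑f)^[k] z) with hD_def
  have hD0 : 0 ≤ D := Finset.sum_nonneg fun _ _ => dist_nonneg
  have hC₁ε : 0 < C₁ * ε := mul_pos hf.C₁_pos hf.eps_pos
  refine ⟨Real.exp (lam * N) * (C₁ * ε + D), by positivity, ?_⟩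
  intro n
  rcases le_or_gt n N with hn | hn
  · have h1 : dist ((⇑f)^[n] y) ((⇑f)^[n] z) ≤ D :=
      Finset.single_le_sum (f := fun k => dist ((⇑f)^[k] y) ((⇑f)^[k] z))
        (fun _ _ => dist_nonneg) (Finset.mem_range.2 (Nat.lt_succ_of_le hn))
    have hnN : (n : ℝ) ≤ N := Nat.cast_le.2 hn
    have h2 : Real.exp (-lam * N) ≤ Real.exp (-lam * n) :=
      Real.exp_le_exp.2 (by nlinarith [hf.lam_pos])
    have h4 := mul_le_mul_of_nonneg_left h2
      (by positivity : (0:ℝ) ≤ Real.exp (lam * N) * (C₁ * ε + D))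
    have h5 : Real.exp (lam * (N:ℝ)) * (C₁ * ε + D) * Real.exp (-lam * (N:ℝ))
        = C₁ * ε + D := by
      rw [mul_right_comm, ← Real.exp_add,
        show lam * (N:ℝ) + -lam * N = 0 by ring, Real.exp_zero, one_mul]
    linarith
  · obtain ⟨k, rfl⟩ : ∃ k, n = k + N := ⟨n - N, by omega⟩
    have mem1 : (⇑f)^[N] y ∈ localStable (⇑f) ε ((⇑f)^[N] y) := by
      intro j; simp [hf.eps_pos.le]
    have mem2 : (⇑f)^[N] z ∈ localStable (⇑f) ε ((⇑f)^[N] y) := by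
      intro j
      rw [← Function.iterate_add_apply, ← Function.iterate_add_apply]
      exact (hN (j + N) (Nat.le_add_left _ _)).le
    have h1 := hf.stable_contr ((⇑f)^[N] y) ((⇑f)^[N] y) ((⇑f)^[N] z) mem1 mem2 k
    rw [← Function.iterate_add_apply, ← Function.iterate_add_apply] at h1
    have h2 : dist ((⇑f)^[N] y) ((⇑f)^[N] z) ≤ ε := (hN N le_rfl).le
    have goal_eq : Real.exp (lam * (N:ℝ)) * (C₁ * ε + D) *
        Real.exp (-lam * ((k:ℝ) + (N:ℝ))) = (C₁ * ε + D) * Real.exp (-lam * (k:ℝ)) := by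
      rw [show -lam * ((k:ℝ) + N) = (-lam * k) + (-lam * N) by ring, Real.exp_add]
      have e2 : Real.exp (lam * (N:ℝ)) * Real.exp (-lam * (N:ℝ)) = 1 := by
        rw [← Real.exp_add, show lam * (N:ℝ) + -lam * N = 0 by ring, Real.exp_zero]
      linear_combination (C₁ * ε + D) * Real.exp (-lam * (k:ℝ)) * e2
    push_cast
    rw [goal_eq]
    calc dist ((⇑f)^[k + N] y) ((⇑f)^[k + N] z)
        ≤ C₁ * Real.exp (-lam * k) * dist ((⇑f)^[N] y) ((⇑f)^[N] z) := h1
      _ ≤ C₁ * Real.exp (-lam * k) * ε := by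
          exact mul_le_mul_of_nonneg_left h2
            (mul_nonneg hf.C₁_pos.le (Real.exp_pos _).le)
      _ ≤ (C₁ * ε + D) * Real.exp (-lam * (k:ℝ)) := by
          nlinarith [Real.exp_pos (-lam * (k:ℝ)), hD0]

end SHAux

/-- existence of stable holonomies: for `y, z` in the stable set of `x`,
the limit `H^{s,A}_{yz} = lim_n Aⁿ(z)⁻¹ Aⁿ(y)` exists in `GL(d,ℝ)`. -/
theorem stmt1 {M : Type*} [MetricSpace M] [CompactSpace M] {d : ℕ}
    (f : M ≃ M) (C₁ lam ε τ : ℝ) (hf : IsHyperbolic f C₁ lam ε τ)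
    (A : M → GL (Fin d) ℝ)
    (hA : ∃ K : NNReal, LipschitzWith K fun x => (A x : Matrix (Fin d) (Fin d) ℝ))
    (θ : ℝ) (hθ0 : 0 < θ) (hθ : θ < lam) (hFB : FiberBunched (⇑f) A θ) :
    ∀ x : M, ∀ y ∈ stableSet (⇑f) x, ∀ z ∈ stableSet (⇑f) x,
      ∃ H : GL (Fin d) ℝ,
        Tendsto (fun n : ℕ =>
            ((((cocycle (⇑f) A n z)⁻¹ * cocycle (⇑f) A n y : GL (Fin d) ℝ)) :
              Matrix (Fin d) (Fin d) ℝ))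
          atTop (𝓝 (H : Matrix (Fin d) (Fin d) ℝ)) := by
  intro x y hy z hz
  rcases Nat.eq_zero_or_pos d with hd0 | hd
  · subst hd0
    refine ⟨1, ?_⟩
    have he : (fun n : ℕ =>
        (((cocycle (⇑f) A n z)⁻¹ * cocycle (⇑f) A n y : GL (Fin 0) ℝ) :
          Matrix (Fin 0) (Fin 0) ℝ)) =
        fun _ => ((1 : GL (Fin 0) ℝ) : Matrix (Fin 0) (Fin 0) ℝ) :=
      funext fun n => Subsingleton.elim _ _
    rw [he]
    exact tendsto_const_nhds
  · obtain ⟨K, hK⟩ := hA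
    obtain ⟨C₃, hC₃, hFB'⟩ := hFB
    obtain ⟨C, hCpos, hC⟩ := SHAux.dist_decay f C₁ lam ε τ hf x y z hy hz
    have hC' : ∀ n : ℕ, dist ((⇑f)^[n] z) ((⇑f)^[n] y) ≤ C * Real.exp (-lam * n) :=
      fun n => by rw [dist_comm]; exact hC n
    obtain ⟨Hm, hHm⟩ := SHAux.key hd (⇑f) A K hK θ lam C₃ C hθ hC₃ hFB' y z hC
    obtain ⟨Hm', hHm'⟩ := SHAux.key hd (⇑f) A K hK θ lam C₃ C hθ hC₃ hFB' z y hC'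
    have e1 : ∀ n : ℕ,
        (((cocycle (⇑f) A n z)⁻¹ * cocycle (⇑f) A n y : GL (Fin d) ℝ) :
          Matrix (Fin d) (Fin d) ℝ) *
        (((cocycle (⇑f) A n y)⁻¹ * cocycle (⇑f) A n z : GL (Fin d) ℝ) :
          Matrix (Fin d) (Fin d) ℝ) = 1 := by
      intro n
      rw [← Units.val_mul]
      have hgrp : ((cocycle (⇑f) A n z)⁻¹ * cocycle (⇑f) A n y) *
          ((cocycle (⇑f) A n y)⁻¹ * cocycle (⇑f) A n z) = (1 : GL (Fin d) ℝ) := by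
        group
      rw [hgrp, Units.val_one]
    have e2 : ∀ n : ℕ,
        (((cocycle (⇑f) A n y)⁻¹ * cocycle (⇑f) A n z : GL (Fin d) ℝ) :
          Matrix (Fin d) (Fin d) ℝ) *
        (((cocycle (⇑f) A n z)⁻¹ * cocycle (⇑f) A n y : GL (Fin d) ℝ) :
          Matrix (Fin d) (Fin d) ℝ) = 1 := by
      intro n
      rw [← Units.val_mul]
      have hgrp : ((cocycle (⇑f) A n y)⁻¹ * cocycle (⇑f) A n z) *
          ((cocycle (⇑f) A n z)⁻¹ * cocycle (⇑f) A n y) = (1 : GL (Fin d) ℝ) := by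
        group
      rw [hgrp, Units.val_one]
    have hmul1 := hHm.mul hHm'
    simp only [e1] at hmul1
    have h1 : Hm * Hm' = 1 := tendsto_nhds_unique hmul1 tendsto_const_nhds
    have hmul2 := hHm'.mul hHm
    simp only [e2] at hmul2
    have h2 : Hm' * Hm = 1 := tendsto_nhds_unique hmul2 tendsto_const_nhds
    exact ⟨⟨Hm, Hm', h1, h2⟩, hHm⟩
end
end

section
/- Under the same hypotheses, there exists C₄ > 0 such that for all x ∈ M and y, z ∈ W^s_ε(x), the stable holonomy satisfies ‖H^{s,A}_{yz} − Id‖ ≤ C₄ d(y,z). -/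
open Filter Topology Metric Matrix
open scoped Matrix.Norms.L2Operator
noncomputable section

lemma geom_aux (r : ℝ) (h0 : 0 ≤ r) (h1 : r < 1) (n : ℕ) :
    ∑ j ∈ Finset.range n, r ^ j ≤ (1 - r)⁻¹ := by
  calc ∑ j ∈ Finset.range n, r ^ j
      ≤ ∑' j : ℕ, r ^ j :=
        Summable.sum_le_tsum _ (fun i _ => pow_nonneg h0 i) (summable_geometric_of_lt_one h0 h1)
    _ = (1 - r)⁻¹ := tsum_geometric_of_lt_one h0 h1

lemma norm_one_le_mat (d : ℕ) : ‖(1 : Matrix (Fin d) (Fin d) ℝ)‖ ≤ 1 := by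
  rw [Matrix.cstar_norm_def, _root_.map_one]
  exact ContinuousLinearMap.norm_id_le


/-- there is `C₄ > 0` such that for `y, z` in a common local stable set of size
`ε`, the stable holonomy satisfies `‖H^{s,A}_{yz} − Id‖ ≤ C₄ d(y,z)`. -/
theorem stmt3 {M : Type*} [MetricSpace M] [CompactSpace M] {d : ℕ}
    (f : M ≃ M) (C₁ lam ε τ : ℝ) (hf : IsHyperbolic f C₁ lam ε τ)
    (A : M → GL (Fin d) ℝ)
    (hA : ∃ K : NNReal, LipschitzWith K fun x => (A x : Matrix (Fin d) (Fin d) ℝ))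
    (θ : ℝ) (hθ0 : 0 < θ) (hθ : θ < lam) (hFB : FiberBunched (⇑f) A θ)
    (H : M → M → GL (Fin d) ℝ)
    (hH : ∀ x : M, ∀ y ∈ localStable (⇑f) ε x, ∀ z ∈ localStable (⇑f) ε x,
      Tendsto (fun n : ℕ =>
          ((((cocycle (⇑f) A n z)⁻¹ * cocycle (⇑f) A n y : GL (Fin d) ℝ)) :
            Matrix (Fin d) (Fin d) ℝ))
        atTop (𝓝 (H y z : Matrix (Fin d) (Fin d) ℝ))) :
    ∃ C₄ > (0 : ℝ), ∀ x : M, ∀ y ∈ localStable (⇑f) ε x, ∀ z ∈ localStable (⇑f) ε x,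
      ‖(H y z : Matrix (Fin d) (Fin d) ℝ) - 1‖ ≤ C₄ * dist y z := by
  obtain ⟨K, hK⟩ := hA
  obtain ⟨C₃, hC₃, hFB'⟩ := hFB
  rcases Nat.eq_zero_or_pos d with hd | hd
  · subst hd
    refine ⟨1, one_pos, fun x y hy z hz => ?_⟩
    have h0 : (H y z : Matrix (Fin 0) (Fin 0) ℝ) - 1 = 0 := by
      ext i j; exact i.elim0
    rw [h0, norm_zero]
    have := dist_nonneg (x := y) (y := z); linarith
  rcases isEmpty_or_nonempty M with hM | hM
  · exact ⟨1, one_pos, fun x => (IsEmpty.false x).elim⟩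
  -- positivity of matrix norms of A x
  have hone : (1 : Matrix (Fin d) (Fin d) ℝ) ≠ 0 := by
    intro h0
    have h1 : (1 : Matrix (Fin d) (Fin d) ℝ) ⟨0, hd⟩ ⟨0, hd⟩ = 0 := by rw [h0]; rfl
    rw [Matrix.one_apply_eq] at h1
    exact one_ne_zero h1
  have hApos : ∀ x : M, 0 < ‖(A x : Matrix (Fin d) (Fin d) ℝ)‖ := by
    intro x
    rw [norm_pos_iff]
    intro h0
    have h1 : ((A x : Matrix (Fin d) (Fin d) ℝ)) * (((A x)⁻¹ : GL (Fin d) ℝ) : Matrix (Fin d) (Fin d) ℝ) = 1 := by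
      rw [← Units.val_mul, mul_inv_cancel, Units.val_one]
    rw [h0, zero_mul] at h1
    exact hone h1.symm
  -- minimum of ‖A x‖ over compact M
  have hcont : Continuous fun x : M => ‖(A x : Matrix (Fin d) (Fin d) ℝ)‖ := hK.continuous.norm
  obtain ⟨x₀, -, hmin⟩ := isCompact_univ.exists_isMinOn Set.univ_nonempty hcont.continuousOn
  set m : ℝ := ‖(A x₀ : Matrix (Fin d) (Fin d) ℝ)‖ with hm_def
  have hm_pos : 0 < m := hApos x₀
  have hm_le : ∀ x : M, m ≤ ‖(A x : Matrix (Fin d) (Fin d) ℝ)‖ := fun x => hmin (Set.mem_univ x)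
  -- bound on ‖(A x)⁻¹‖
  have hFB1 : ∀ x : M, ‖(A x : Matrix (Fin d) (Fin d) ℝ)‖ *
      ‖(((A x)⁻¹ : GL (Fin d) ℝ) : Matrix (Fin d) (Fin d) ℝ)‖ ≤ C₃ * Real.exp θ := by
    intro x
    have h1 := hFB' x 1
    have hc1 : cocycle (⇑f) A 1 x = A x := by
      show A ((⇑f)^[0] x) * cocycle (⇑f) A 0 x = A x
      simp [cocycle]
    rw [hc1] at h1
    simpa [gnorm] using h1
  set Minv : ℝ := C₃ * Real.exp θ / m with hMinv_def
  have hMinv_pos : 0 < Minv := div_pos (mul_pos hC₃ (Real.exp_pos θ)) hm_pos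
  have hMinv : ∀ x : M, ‖(((A x)⁻¹ : GL (Fin d) ℝ) : Matrix (Fin d) (Fin d) ℝ)‖ ≤ Minv := by
    intro x
    rw [le_div_iff₀ hm_pos]
    calc ‖(((A x)⁻¹ : GL (Fin d) ℝ) : Matrix (Fin d) (Fin d) ℝ)‖ * m
        ≤ ‖(((A x)⁻¹ : GL (Fin d) ℝ) : Matrix (Fin d) (Fin d) ℝ)‖ *
            ‖(A x : Matrix (Fin d) (Fin d) ℝ)‖ :=
          mul_le_mul_of_nonneg_left (hm_le x) (norm_nonneg _)
      _ = ‖(A x : Matrix (Fin d) (Fin d) ℝ)‖ *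
            ‖(((A x)⁻¹ : GL (Fin d) ℝ) : Matrix (Fin d) (Fin d) ℝ)‖ := mul_comm _ _
      _ ≤ C₃ * Real.exp θ := hFB1 x
  -- constants
  set Kr : ℝ := (K : ℝ) + 1 with hKr_def
  have hKr_pos : 0 < Kr := by positivity
  set r : ℝ := Real.exp (θ - lam) with hr_def
  have hr0 : 0 < r := Real.exp_pos _
  have hr1 : r < 1 := Real.exp_lt_one_iff.mpr (by linarith)
  set c : ℝ := C₃ * Minv * Kr * C₁ with hc_def
  have hc_pos : 0 < c := by
    have := hf.C₁_pos
    exact mul_pos (mul_pos (mul_pos hC₃ hMinv_pos) hKr_pos) this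
  set E : ℝ := Real.exp (2 * ε * c * (1 - r)⁻¹) with hE_def
  have hE_pos : 0 < E := Real.exp_pos _
  have hinv_pos : (0:ℝ) < (1 - r)⁻¹ := inv_pos.mpr (by linarith)
  refine ⟨c * E * (1 - r)⁻¹, mul_pos (mul_pos hc_pos hE_pos) hinv_pos, ?_⟩
  intro x y hy z hz
  set D : ℝ := dist y z with hD_def
  have hD0 : 0 ≤ D := dist_nonneg
  have hD2ε : D ≤ 2 * ε := by
    have h0y := hy 0
    have h0z := hz 0
    simp only [Function.iterate_zero, id_eq] at h0y h0z
    calc D ≤ dist y x + dist x z := dist_triangle _ _ _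
      _ ≤ ε + ε := by rw [dist_comm y x]; exact add_le_add h0y h0z
      _ = 2 * ε := by ring
  have hcontr := hf.stable_contr x y z hy hz
  set P : ℕ → Matrix (Fin d) (Fin d) ℝ := fun n =>
    (((cocycle (⇑f) A n z)⁻¹ * cocycle (⇑f) A n y : GL (Fin d) ℝ) : Matrix (Fin d) (Fin d) ℝ)
    with hP_def
  have hP0 : P 0 = 1 := by simp [hP_def, cocycle]
  -- cocycle facts
  have hcyc : ∀ (k : ℕ) (w : M), cocycle (⇑f) A (k+1) w = A ((⇑f)^[k] w) * cocycle (⇑f) A k w :=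
    fun k w => rfl
  have hCyCz : ∀ k : ℕ, ‖((cocycle (⇑f) A k y : GL (Fin d) ℝ) : Matrix (Fin d) (Fin d) ℝ)‖ ≤
      ‖((cocycle (⇑f) A k z : GL (Fin d) ℝ) : Matrix (Fin d) (Fin d) ℝ)‖ * ‖P k‖ := by
    intro k
    have h1 : ((cocycle (⇑f) A k y : GL (Fin d) ℝ) : Matrix (Fin d) (Fin d) ℝ) =
        ((cocycle (⇑f) A k z : GL (Fin d) ℝ) : Matrix (Fin d) (Fin d) ℝ) * P k := by
      rw [hP_def, ← Units.val_mul, mul_inv_cancel_left]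
    rw [h1]
    exact norm_mul_le _ _
  -- the key step bound
  have hrk : ∀ k : ℕ, Real.exp (θ * k) * Real.exp (-lam * k) = r ^ k := by
    intro k
    rw [← Real.exp_add, hr_def, ← Real.exp_nat_mul]
    congr 1
    push_cast
    ring
  have hstep : ∀ k : ℕ, ‖P (k+1) - P k‖ ≤ c * r ^ k * D * ‖P k‖ := by
    intro k
    set a : GL (Fin d) ℝ := A ((⇑f)^[k] y) with ha_def
    set b : GL (Fin d) ℝ := A ((⇑f)^[k] z) with hb_def
    set g : GL (Fin d) ℝ := cocycle (⇑f) A k y with hg_def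
    set h : GL (Fin d) ℝ := cocycle (⇑f) A k z with hh_def
    have hPk1 : P (k+1) = (((b*h)⁻¹ * (a*g) : GL (Fin d) ℝ) : Matrix (Fin d) (Fin d) ℝ) := rfl
    have hPk : P k = ((h⁻¹ * g : GL (Fin d) ℝ) : Matrix (Fin d) (Fin d) ℝ) := rfl
    have hiden : P (k+1) - P k
        = (((b*h)⁻¹ : GL (Fin d) ℝ) : Matrix (Fin d) (Fin d) ℝ)
            * ((a : Matrix (Fin d) (Fin d) ℝ) - (b : Matrix (Fin d) (Fin d) ℝ))
            * (g : Matrix (Fin d) (Fin d) ℝ) := by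
      rw [hPk1, hPk]
      have e : (h⁻¹ : GL (Fin d) ℝ) = (b*h)⁻¹ * b := by group
      rw [e]
      simp only [Units.val_mul, mul_sub, sub_mul, mul_assoc]
    have hQ : ‖(((b*h)⁻¹ : GL (Fin d) ℝ) : Matrix (Fin d) (Fin d) ℝ)‖ ≤
        ‖((h⁻¹ : GL (Fin d) ℝ) : Matrix (Fin d) (Fin d) ℝ)‖ * Minv := by
      have e : (((b*h)⁻¹ : GL (Fin d) ℝ) : Matrix (Fin d) (Fin d) ℝ)
          = ((h⁻¹ : GL (Fin d) ℝ) : Matrix (Fin d) (Fin d) ℝ)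
            * ((b⁻¹ : GL (Fin d) ℝ) : Matrix (Fin d) (Fin d) ℝ) := by
        rw [_root_.mul_inv_rev, Units.val_mul]
      rw [e]
      exact (norm_mul_le _ _).trans (mul_le_mul_of_nonneg_left (hMinv _) (norm_nonneg _))
    have hab : ‖(a : Matrix (Fin d) (Fin d) ℝ) - (b : Matrix (Fin d) (Fin d) ℝ)‖ ≤
        Kr * (C₁ * Real.exp (-lam * k) * D) := by
      rw [← dist_eq_norm]
      calc dist (a : Matrix (Fin d) (Fin d) ℝ) (b : Matrix (Fin d) (Fin d) ℝ)
          ≤ (K : ℝ) * dist ((⇑f)^[k] y) ((⇑f)^[k] z) := hK.dist_le_mul _ _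
        _ ≤ Kr * (C₁ * Real.exp (-lam * k) * D) := by
            apply mul_le_mul (by rw [hKr_def]; linarith [K.coe_nonneg]) (hcontr k)
              dist_nonneg hKr_pos.le
    have hFBk := hFB' z k
    simp only [gnorm] at hFBk
    rw [← hh_def] at hFBk
    have hnn : ∀ u : Matrix (Fin d) (Fin d) ℝ, 0 ≤ ‖u‖ := fun u => norm_nonneg u
    calc ‖P (k+1) - P k‖
        = ‖(((b*h)⁻¹ : GL (Fin d) ℝ) : Matrix (Fin d) (Fin d) ℝ)
            * ((a : Matrix (Fin d) (Fin d) ℝ) - (b : Matrix (Fin d) (Fin d) ℝ))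
            * (g : Matrix (Fin d) (Fin d) ℝ)‖ := by rw [hiden]
      _ ≤ ‖(((b*h)⁻¹ : GL (Fin d) ℝ) : Matrix (Fin d) (Fin d) ℝ)‖
            * ‖(a : Matrix (Fin d) (Fin d) ℝ) - (b : Matrix (Fin d) (Fin d) ℝ)‖
            * ‖(g : Matrix (Fin d) (Fin d) ℝ)‖ :=
          (norm_mul_le _ _).trans (mul_le_mul_of_nonneg_right (norm_mul_le _ _) (hnn _))
      _ ≤ (‖((h⁻¹ : GL (Fin d) ℝ) : Matrix (Fin d) (Fin d) ℝ)‖ * Minv)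
            * (Kr * (C₁ * Real.exp (-lam * k) * D))
            * (‖((h : GL (Fin d) ℝ) : Matrix (Fin d) (Fin d) ℝ)‖ * ‖P k‖) := by
          have hx1 : (0:ℝ) ≤ ‖((h⁻¹ : GL (Fin d) ℝ) : Matrix (Fin d) (Fin d) ℝ)‖ * Minv :=
            mul_nonneg (hnn _) hMinv_pos.le
          apply mul_le_mul (mul_le_mul hQ hab (hnn _) hx1) (hCyCz k) (hnn _)
          refine mul_nonneg hx1 ?_
          exact mul_nonneg hKr_pos.le
            (mul_nonneg (mul_nonneg hf.C₁_pos.le (Real.exp_pos _).le) hD0)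
      _ = (‖((h : GL (Fin d) ℝ) : Matrix (Fin d) (Fin d) ℝ)‖
            * ‖((h⁻¹ : GL (Fin d) ℝ) : Matrix (Fin d) (Fin d) ℝ)‖)
            * (Minv * Kr * (C₁ * Real.exp (-lam * k) * D) * ‖P k‖) := by ring
      _ ≤ (C₃ * Real.exp (θ * k)) * (Minv * Kr * (C₁ * Real.exp (-lam * k) * D) * ‖P k‖) := by
          apply mul_le_mul_of_nonneg_right hFBk
          have := Real.exp_pos (-lam * k)
          have h1 : (0:ℝ) ≤ C₁ * Real.exp (-lam * k) * D :=
            mul_nonneg (mul_nonneg hf.C₁_pos.le (Real.exp_pos _).le) hD0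
          exact mul_nonneg (mul_nonneg (mul_nonneg hMinv_pos.le hKr_pos.le) h1) (hnn _)
      _ = c * r ^ k * D * ‖P k‖ := by
          rw [← hrk k, hc_def]; ring
  -- inductive bound on ‖P k‖
  have hPle : ∀ k : ℕ, ‖P k‖ ≤ Real.exp (2 * ε * c * ∑ j ∈ Finset.range k, r ^ j) := by
    intro k
    induction k with
    | zero => simpa [hP0] using norm_one_le_mat d
    | succ k ih =>
      have h1 : ‖P (k+1)‖ ≤ ‖P k‖ + ‖P (k+1) - P k‖ := by
        calc ‖P (k+1)‖ = ‖P k + (P (k+1) - P k)‖ := by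
              congr 1; abel
          _ ≤ ‖P k‖ + ‖P (k+1) - P k‖ := norm_add_le _ _
      have h2 : ‖P (k+1)‖ ≤ ‖P k‖ * (1 + 2 * ε * c * r ^ k) := by
        have h3 : ‖P (k+1) - P k‖ ≤ 2 * ε * c * r ^ k * ‖P k‖ := by
          refine (hstep k).trans ?_
          have : c * r ^ k * D ≤ 2 * ε * c * r ^ k :=
            calc c * r ^ k * D ≤ c * r ^ k * (2 * ε) :=
                  mul_le_mul_of_nonneg_left hD2ε
                    (mul_nonneg hc_pos.le (pow_nonneg hr0.le k))
              _ = 2 * ε * c * r ^ k := by ring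
          exact mul_le_mul_of_nonneg_right this (norm_nonneg _)
        nlinarith [norm_nonneg (P k)]
      calc ‖P (k+1)‖ ≤ ‖P k‖ * (1 + 2 * ε * c * r ^ k) := h2
        _ ≤ Real.exp (2 * ε * c * ∑ j ∈ Finset.range k, r ^ j)
              * Real.exp (2 * ε * c * r ^ k) := by
            apply mul_le_mul ih ?_ ?_ (Real.exp_pos _).le
            · have := Real.add_one_le_exp (2 * ε * c * r ^ k)
              linarith
            · have hεp := hf.eps_pos
              have : (0:ℝ) ≤ 2 * ε * c * r ^ k :=
                mul_nonneg (mul_nonneg (by linarith) hc_pos.le) (pow_nonneg hr0.le k)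
              linarith
        _ = Real.exp (2 * ε * c * ∑ j ∈ Finset.range (k+1), r ^ j) := by
            rw [← Real.exp_add, Finset.sum_range_succ]
            congr 1
            ring
  have hPE : ∀ k : ℕ, ‖P k‖ ≤ E := by
    intro k
    refine (hPle k).trans ?_
    rw [hE_def]
    apply Real.exp_le_exp.mpr
    have hεp := hf.eps_pos
    exact mul_le_mul_of_nonneg_left (geom_aux r hr0.le hr1 k)
      (mul_nonneg (by have := hf.eps_pos; linarith) hc_pos.le)
  -- telescoping bound
  have hPn : ∀ n : ℕ, ‖P n - 1‖ ≤ c * E * (1 - r)⁻¹ * D := by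
    intro n
    have htel : P n - P 0 = ∑ k ∈ Finset.range n, (P (k+1) - P k) :=
      (Finset.sum_range_sub P n).symm
    calc ‖P n - 1‖ = ‖∑ k ∈ Finset.range n, (P (k+1) - P k)‖ := by
          rw [← htel, hP0]
      _ ≤ ∑ k ∈ Finset.range n, ‖P (k+1) - P k‖ := norm_sum_le _ _
      _ ≤ ∑ k ∈ Finset.range n, c * D * E * r ^ k := by
          apply Finset.sum_le_sum
          intro k _
          refine (hstep k).trans ?_
          calc c * r ^ k * D * ‖P k‖ ≤ c * r ^ k * D * E :=
                mul_le_mul_of_nonneg_left (hPE k)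
                  (mul_nonneg (mul_nonneg hc_pos.le (pow_nonneg hr0.le k)) hD0)
            _ = c * D * E * r ^ k := by ring
      _ = c * D * E * ∑ k ∈ Finset.range n, r ^ k := by rw [Finset.mul_sum]
      _ ≤ c * D * E * (1 - r)⁻¹ :=
          mul_le_mul_of_nonneg_left (geom_aux r hr0.le hr1 n)
            (mul_nonneg (mul_nonneg hc_pos.le hD0) hE_pos.le)
      _ = c * E * (1 - r)⁻¹ * D := by ring
  have hlim := hH x y hy z hz
  have hlim2 : Tendsto (fun n : ℕ => ‖P n - 1‖) atTop
      (𝓝 ‖(H y z : Matrix (Fin d) (Fin d) ℝ) - 1‖) :=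
    ((hlim.sub tendsto_const_nhds).norm)
  exact le_of_tendsto hlim2 (Filter.Eventually.of_forall hPn)
end
end

section
/- Let f be a hyperbolic homeomorphism of a compact metric space M, A Lipschitz and fiber bunched, x ∈ M, and y, z ∈ W^s_ε(x). Then for every n ≥ 0, ‖A^{n+1}(z)⁻¹A^{n+1}(y) − Aⁿ(z)⁻¹Aⁿ(y)‖ ≤ L e^{n(θ−λ)} d(y,z) for some constant L depending only on A and f; in particular the sequence (Aⁿ(z)⁻¹Aⁿ(y))ₙ is Cauchy. -/
open Filter Topology Metric Matrix
open scoped Matrix.Norms.L2Operator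
noncomputable section

set_option maxHeartbeats 1000000 in
/-- the Cauchy estimate
`‖A^{n+1}(z)⁻¹A^{n+1}(y) − Aⁿ(z)⁻¹Aⁿ(y)‖ ≤ L e^{n(θ−λ)} d(y,z)` for `y, z` in a common local
stable set; in particular the sequence `(Aⁿ(z)⁻¹Aⁿ(y))ₙ` is Cauchy. -/
theorem stmt4 {M : Type*} [MetricSpace M] [CompactSpace M] {d : ℕ}
    (f : M ≃ M) (C₁ lam ε τ : ℝ) (hf : IsHyperbolic f C₁ lam ε τ)
    (A : M → GL (Fin d) ℝ)
    (hA : ∃ K : NNReal, LipschitzWith K fun x => (A x : Matrix (Fin d) (Fin d) ℝ))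
    (θ : ℝ) (hθ0 : 0 < θ) (hθ : θ < lam) (hFB : FiberBunched (⇑f) A θ) :
    ∃ L > (0 : ℝ), ∀ x : M, ∀ y ∈ localStable (⇑f) ε x, ∀ z ∈ localStable (⇑f) ε x,
      (∀ n : ℕ,
        ‖((((cocycle (⇑f) A (n + 1) z)⁻¹ * cocycle (⇑f) A (n + 1) y : GL (Fin d) ℝ)) :
            Matrix (Fin d) (Fin d) ℝ) -
          ((((cocycle (⇑f) A n z)⁻¹ * cocycle (⇑f) A n y : GL (Fin d) ℝ)) :
            Matrix (Fin d) (Fin d) ℝ)‖ ≤ L * Real.exp ((θ - lam) * n) * dist y z) ∧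
      CauchySeq (fun n : ℕ =>
        ((((cocycle (⇑f) A n z)⁻¹ * cocycle (⇑f) A n y : GL (Fin d) ℝ)) :
          Matrix (Fin d) (Fin d) ℝ)) := by
  classical
  -- trivial cases
  rcases isEmpty_or_nonempty M with hM | hM
  · exact ⟨1, one_pos, fun x => (IsEmpty.false x).elim⟩
  rcases Nat.eq_zero_or_pos d with hd | hd
  · subst hd
    refine ⟨1, one_pos, fun x y hy z hz => ⟨fun n => ?_, ?_⟩⟩
    · have h0 : ((((cocycle (⇑f) A (n + 1) z)⁻¹ * cocycle (⇑f) A (n + 1) y : GL (Fin 0) ℝ)) :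
            Matrix (Fin 0) (Fin 0) ℝ) -
          ((((cocycle (⇑f) A n z)⁻¹ * cocycle (⇑f) A n y : GL (Fin 0) ℝ)) :
            Matrix (Fin 0) (Fin 0) ℝ) = 0 := Subsingleton.elim _ _
      rw [h0, norm_zero]
      have h1 : (0:ℝ) ≤ Real.exp ((θ - lam) * n) := (Real.exp_pos _).le
      have h2 : (0:ℝ) ≤ dist y z := dist_nonneg
      nlinarith
    · have : (fun n : ℕ =>
        ((((cocycle (⇑f) A n z)⁻¹ * cocycle (⇑f) A n y : GL (Fin 0) ℝ)) :
          Matrix (Fin 0) (Fin 0) ℝ)) = fun _ => (0 : Matrix (Fin 0) (Fin 0) ℝ) := by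
        funext n; exact Subsingleton.elim _ _
      rw [this]; exact cauchySeq_const 0
  obtain ⟨K, hK⟩ := hA
  obtain ⟨C₃, hC₃pos, hC₃⟩ := hFB
  have hKnn : (0:ℝ) ≤ (K:ℝ) := K.coe_nonneg
  -- norm of A x is bounded below
  have hAcont : Continuous fun x : M => ((A x : Matrix (Fin d) (Fin d) ℝ)) := hK.continuous
  obtain ⟨x₀, -, hx₀⟩ := isCompact_univ.exists_isMinOn (Set.univ_nonempty (α := M))
    (hAcont.norm.continuousOn)
  set m : ℝ := ‖(A x₀ : Matrix (Fin d) (Fin d) ℝ)‖ with hm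
  have hx₀' : ∀ w : M, m ≤ ‖(A w : Matrix (Fin d) (Fin d) ℝ)‖ := fun w =>
    hx₀ (Set.mem_univ w)
  haveI : NeZero d := ⟨hd.ne'⟩
  have hmpos : 0 < m := by
    rw [hm, norm_pos_iff]
    intro h
    have h1 : ((A x₀ : Matrix (Fin d) (Fin d) ℝ)) * ((A x₀)⁻¹ : GL (Fin d) ℝ) = 1 := by
      rw [← Units.val_mul, mul_inv_cancel, Units.val_one]
    rw [h, zero_mul] at h1
    exact one_ne_zero h1.symm
  -- fiber bunching at time 1 gives a bound on ‖(A w)⁻¹‖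
  have hcoc1 : ∀ w : M, cocycle (⇑f) A 1 w = A w := by
    intro w; simp [cocycle]
  set C₂ : ℝ := C₃ * Real.exp θ / m with hC₂def
  have hC₂pos : 0 < C₂ := div_pos (mul_pos hC₃pos (Real.exp_pos _)) hmpos
  have hinvA : ∀ w : M, ‖(((A w)⁻¹ : GL (Fin d) ℝ) : Matrix (Fin d) (Fin d) ℝ)‖ ≤ C₂ := by
    intro w
    have h1 := hC₃ w 1
    rw [hcoc1 w] at h1
    have h1' : gnorm (A w) * gnorm ((A w)⁻¹) ≤ C₃ * Real.exp θ := by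
      simpa using h1
    have hw : m ≤ gnorm (A w) := hx₀' w
    have hnn : (0:ℝ) ≤ gnorm ((A w)⁻¹) := norm_nonneg _
    rw [hC₂def, le_div_iff₀ hmpos]
    calc gnorm ((A w)⁻¹) * m ≤ gnorm ((A w)⁻¹) * gnorm (A w) :=
          mul_le_mul_of_nonneg_left hw hnn
      _ = gnorm (A w) * gnorm ((A w)⁻¹) := mul_comm _ _
      _ ≤ C₃ * Real.exp θ := h1'
  set e₁ : ℝ := ‖(1 : Matrix (Fin d) (Fin d) ℝ)‖ with he₁
  have he₁nn : 0 ≤ e₁ := norm_nonneg _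
  set r : ℝ := Real.exp (θ - lam) with hr
  have hr0 : 0 < r := Real.exp_pos _
  have hr1 : r < 1 := by
    rw [hr]
    have : θ - lam < 0 := by linarith
    calc Real.exp (θ - lam) < Real.exp 0 := Real.exp_lt_exp.2 this
      _ = 1 := Real.exp_zero
  set c : ℝ := C₂ * (K:ℝ) * C₁ * C₃ with hc
  have hcnn : 0 ≤ c :=
    mul_nonneg (mul_nonneg (mul_nonneg hC₂pos.le hKnn) hf.C₁_pos.le) hC₃pos.le
  set a : ℝ := c * (2 * ε) with ha
  have hann : 0 ≤ a := mul_nonneg hcnn (by linarith [hf.eps_pos])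
  set D : ℝ := e₁ * Real.exp (a * (1 - r)⁻¹) with hD
  have hDnn : 0 ≤ D := mul_nonneg he₁nn (Real.exp_pos _).le
  have hLpos : 0 < c * D + 1 := by
    have := mul_nonneg hcnn hDnn; linarith
  refine ⟨c * D + 1, hLpos, fun x y hy z hz => ?_⟩
  set B : ℕ → GL (Fin d) ℝ := fun n => (cocycle (⇑f) A n z)⁻¹ * cocycle (⇑f) A n y with hB
  have hdyz : dist y z ≤ 2 * ε := by
    have h1 := hy 0
    have h2 := hz 0
    simp only [Function.iterate_zero, id_eq] at h1 h2
    have := dist_triangle y x z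
    rw [dist_comm y x] at this
    linarith
  have hdnn : (0:ℝ) ≤ dist y z := dist_nonneg
  -- key difference estimate with ‖B n‖ on the right
  have hdiff : ∀ n : ℕ, ‖((B (n+1) : Matrix (Fin d) (Fin d) ℝ)) - (B n : Matrix (Fin d) (Fin d) ℝ)‖
      ≤ c * ‖(B n : Matrix (Fin d) (Fin d) ℝ)‖ * (r ^ n * dist y z) := by
    intro n
    have hyn : cocycle (⇑f) A (n+1) y = A ((⇑f)^[n] y) * cocycle (⇑f) A n y := rfl
    have hzn : cocycle (⇑f) A (n+1) z = A ((⇑f)^[n] z) * cocycle (⇑f) A n z := rfl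
    set P : Matrix (Fin d) (Fin d) ℝ :=
      (((cocycle (⇑f) A (n+1) z)⁻¹ : GL (Fin d) ℝ) : Matrix (Fin d) (Fin d) ℝ) with hP
    set Q : Matrix (Fin d) (Fin d) ℝ :=
      ((A ((⇑f)^[n] y) : Matrix (Fin d) (Fin d) ℝ)) - (A ((⇑f)^[n] z) : Matrix (Fin d) (Fin d) ℝ)
      with hQ
    set R : Matrix (Fin d) (Fin d) ℝ :=
      ((cocycle (⇑f) A n y : GL (Fin d) ℝ) : Matrix (Fin d) (Fin d) ℝ) with hR
    have hBn : B n = (cocycle (⇑f) A (n+1) z)⁻¹ * (A ((⇑f)^[n] z) * cocycle (⇑f) A n y) := by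
      rw [hB]; dsimp only; rw [hzn]; group
    have hident : ((B (n+1) : Matrix (Fin d) (Fin d) ℝ)) - (B n : Matrix (Fin d) (Fin d) ℝ)
        = P * Q * R := by
      rw [hBn, hP, hQ, hR]
      show (((cocycle (⇑f) A (n+1) z)⁻¹ * cocycle (⇑f) A (n+1) y : GL (Fin d) ℝ) :
          Matrix (Fin d) (Fin d) ℝ) - _ = _
      rw [hyn]
      simp only [Units.val_mul]
      noncomm_ring
    rw [hident]
    -- norms of the three factors
    have hinvsplit : (((cocycle (⇑f) A (n+1) z)⁻¹ : GL (Fin d) ℝ)) =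
        ((cocycle (⇑f) A n z)⁻¹ : GL (Fin d) ℝ) * ((A ((⇑f)^[n] z))⁻¹ : GL (Fin d) ℝ) := by
      rw [hzn]; group
    have h1 : ‖P‖ ≤ gnorm ((cocycle (⇑f) A n z)⁻¹) * C₂ := by
      rw [hP, hinvsplit, Units.val_mul]
      exact (norm_mul_le _ _).trans
        (mul_le_mul_of_nonneg_left (hinvA _) (norm_nonneg _))
    have h2 : ‖Q‖ ≤ (K : ℝ) * (C₁ * Real.exp (-lam * n) * dist y z) := by
      have hl := hK.dist_le_mul ((⇑f)^[n] y) ((⇑f)^[n] z)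
      rw [dist_eq_norm] at hl
      exact hl.trans (mul_le_mul_of_nonneg_left
        (hf.stable_contr x y z hy hz n) hKnn)
    have hCy : cocycle (⇑f) A n y = cocycle (⇑f) A n z * B n := by
      rw [hB]; dsimp only; group
    have h3 : ‖R‖ ≤ gnorm (cocycle (⇑f) A n z) * ‖(B n : Matrix (Fin d) (Fin d) ℝ)‖ := by
      rw [hR, hCy, Units.val_mul]
      exact norm_mul_le _ _
    have hfb := hC₃ z n
    have h2nn : (0:ℝ) ≤ (K : ℝ) * (C₁ * Real.exp (-lam * n) * dist y z) :=
      mul_nonneg hKnn (mul_nonneg (mul_nonneg hf.C₁_pos.le (Real.exp_pos _).le) hdnn)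
    have h1nn : (0:ℝ) ≤ gnorm ((cocycle (⇑f) A n z)⁻¹) * C₂ :=
      mul_nonneg (norm_nonneg _) hC₂pos.le
    calc ‖P * Q * R‖
        ≤ ‖P * Q‖ * ‖R‖ := norm_mul_le _ _
      _ ≤ (‖P‖ * ‖Q‖) * ‖R‖ :=
            mul_le_mul_of_nonneg_right (norm_mul_le _ _) (norm_nonneg _)
      _ ≤ ((gnorm ((cocycle (⇑f) A n z)⁻¹) * C₂) * ((K : ℝ) * (C₁ * Real.exp (-lam * n) * dist y z))) *
          (gnorm (cocycle (⇑f) A n z) * ‖(B n : Matrix (Fin d) (Fin d) ℝ)‖) := by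
            apply mul_le_mul _ h3 (norm_nonneg _) (mul_nonneg h1nn h2nn)
            exact mul_le_mul h1 h2 (norm_nonneg _) h1nn
      _ = (gnorm (cocycle (⇑f) A n z) * gnorm ((cocycle (⇑f) A n z)⁻¹)) *
            (C₂ * (K:ℝ) * C₁) * (Real.exp (-lam * n) * dist y z) *
            ‖(B n : Matrix (Fin d) (Fin d) ℝ)‖ := by ring
      _ ≤ (C₃ * Real.exp (θ * n)) * (C₂ * (K:ℝ) * C₁) * (Real.exp (-lam * n) * dist y z) *
            ‖(B n : Matrix (Fin d) (Fin d) ℝ)‖ := by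
            apply mul_le_mul_of_nonneg_right _ (norm_nonneg _)
            apply mul_le_mul_of_nonneg_right _
              (mul_nonneg (Real.exp_pos _).le hdnn)
            exact mul_le_mul_of_nonneg_right hfb
              (mul_nonneg (mul_nonneg hC₂pos.le hKnn) hf.C₁_pos.le)
      _ = c * ‖(B n : Matrix (Fin d) (Fin d) ℝ)‖ *
            ((Real.exp (θ * n) * Real.exp (-lam * n)) * dist y z) := by rw [hc]; ring
      _ = c * ‖(B n : Matrix (Fin d) (Fin d) ℝ)‖ * (r ^ n * dist y z) := by
            rw [← Real.exp_add, hr, ← Real.exp_nat_mul]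
            ring_nf
  -- uniform bound on ‖B n‖
  have hBbound : ∀ n : ℕ, ‖(B n : Matrix (Fin d) (Fin d) ℝ)‖ ≤ D := by
    have hsum : ∀ n : ℕ, ‖(B n : Matrix (Fin d) (Fin d) ℝ)‖
        ≤ e₁ * Real.exp (a * ∑ k ∈ Finset.range n, r ^ k) := by
      intro n
      induction n with
      | zero =>
        have hB0 : B 0 = 1 := by rw [hB]; dsimp only; simp [cocycle]
        rw [hB0]
        simp only [Finset.range_zero, Finset.sum_empty, mul_zero, Real.exp_zero, mul_one,
          Units.val_one]
        exact le_of_eq he₁.symm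
      | succ n ih =>
        have hstep := hdiff n
        have hrn : (0:ℝ) ≤ r ^ n := pow_nonneg hr0.le n
        have htri : ‖(B (n+1) : Matrix (Fin d) (Fin d) ℝ)‖
            ≤ ‖(B n : Matrix (Fin d) (Fin d) ℝ)‖ + c * ‖(B n : Matrix (Fin d) (Fin d) ℝ)‖ *
              (r ^ n * dist y z) := by
          have := norm_add_le ((B n : Matrix (Fin d) (Fin d) ℝ))
            ((B (n+1) : Matrix (Fin d) (Fin d) ℝ) - (B n : Matrix (Fin d) (Fin d) ℝ))
          rw [add_sub_cancel] at this
          linarith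
        have hbnd : c * ‖(B n : Matrix (Fin d) (Fin d) ℝ)‖ * (r ^ n * dist y z)
            ≤ ‖(B n : Matrix (Fin d) (Fin d) ℝ)‖ * (a * r ^ n) := by
          have hkey : c * (r ^ n * dist y z) ≤ a * r ^ n := by
            rw [ha]
            have h' : c * (r ^ n * dist y z) ≤ c * (r ^ n * (2 * ε)) :=
              mul_le_mul_of_nonneg_left (mul_le_mul_of_nonneg_left hdyz hrn) hcnn
            nlinarith
          calc c * ‖(B n : Matrix (Fin d) (Fin d) ℝ)‖ * (r ^ n * dist y z)
              = ‖(B n : Matrix (Fin d) (Fin d) ℝ)‖ * (c * (r ^ n * dist y z)) := by ring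
            _ ≤ ‖(B n : Matrix (Fin d) (Fin d) ℝ)‖ * (a * r ^ n) :=
                mul_le_mul_of_nonneg_left hkey (norm_nonneg _)
        have hexp : (1 : ℝ) + a * r ^ n ≤ Real.exp (a * r ^ n) := by
          have := Real.add_one_le_exp (a * r ^ n)
          linarith
        have harn : (0:ℝ) ≤ 1 + a * r ^ n := by
          have := mul_nonneg hann hrn; linarith
        calc ‖(B (n+1) : Matrix (Fin d) (Fin d) ℝ)‖
            ≤ ‖(B n : Matrix (Fin d) (Fin d) ℝ)‖ * (1 + a * r ^ n) := by nlinarith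
          _ ≤ (e₁ * Real.exp (a * ∑ k ∈ Finset.range n, r ^ k)) * Real.exp (a * r ^ n) :=
              mul_le_mul ih hexp harn (mul_nonneg he₁nn (Real.exp_pos _).le)
          _ = e₁ * Real.exp (a * ∑ k ∈ Finset.range (n+1), r ^ k) := by
              rw [Finset.sum_range_succ, mul_add, Real.exp_add, mul_assoc]
    intro n
    refine (hsum n).trans ?_
    rw [hD]
    apply mul_le_mul_of_nonneg_left _ he₁nn
    apply Real.exp_le_exp.2
    apply mul_le_mul_of_nonneg_left _ hann
    exact sum_le_hasSum _ (fun i _ => pow_nonneg hr0.le i)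
      (hasSum_geometric_of_lt_one hr0.le hr1)
  have hrn' : ∀ n : ℕ, Real.exp ((θ - lam) * n) = r ^ n := by
    intro n; rw [hr, ← Real.exp_nat_mul]; ring_nf
  have hfinal : ∀ n : ℕ,
      ‖((B (n+1) : Matrix (Fin d) (Fin d) ℝ)) - (B n : Matrix (Fin d) (Fin d) ℝ)‖
      ≤ (c * D + 1) * Real.exp ((θ - lam) * n) * dist y z := by
    intro n
    have hrnn : (0:ℝ) ≤ r ^ n * dist y z :=
      mul_nonneg (pow_nonneg hr0.le n) hdnn
    calc ‖((B (n+1) : Matrix (Fin d) (Fin d) ℝ)) - (B n : Matrix (Fin d) (Fin d) ℝ)‖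
        ≤ c * ‖(B n : Matrix (Fin d) (Fin d) ℝ)‖ * (r ^ n * dist y z) := hdiff n
      _ ≤ c * D * (r ^ n * dist y z) :=
          mul_le_mul_of_nonneg_right (mul_le_mul_of_nonneg_left (hBbound n) hcnn) hrnn
      _ ≤ (c * D + 1) * (r ^ n * dist y z) :=
          mul_le_mul_of_nonneg_right (by linarith) hrnn
      _ = (c * D + 1) * Real.exp ((θ - lam) * n) * dist y z := by rw [hrn' n]; ring
  refine ⟨hfinal, ?_⟩
  apply cauchySeq_of_le_geometric r ((c * D + 1) * dist y z) hr1
  intro n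
  rw [dist_eq_norm, ← neg_sub, norm_neg]
  calc ‖((B (n+1) : Matrix (Fin d) (Fin d) ℝ)) - (B n : Matrix (Fin d) (Fin d) ℝ)‖
      ≤ (c * D + 1) * Real.exp ((θ - lam) * n) * dist y z := hfinal n
    _ = (c * D + 1) * dist y z * r ^ n := by rw [hrn' n]; ring
end
end

section
/- Let f: M → M be a hyperbolic homeomorphism with fixed point x, and let A, B be Lipschitz fiber bunched GL(d,ℝ)-valued cocycles over f with Aⁿ(p) = Bⁿ(p) for every periodic point p of period n. Define P(y) = H^{s,A}_{xy} (H^{s,B}_{xy})⁻¹ for y ∈ W^s(x) ∩ W^u(x). Then P satisfies the cohomology equation P(f(y)) = A(y) P(y) B(y)⁻¹ for all y ∈ W^s(x) ∩ W^u(x). -/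
open Filter Topology Metric Matrix
open scoped Matrix.Norms.L2Operator
noncomputable section

lemma cocycle_succ' {M G : Type*} [Group G] (f : M → M) (A : M → G) (n : ℕ) (y : M) :
    cocycle f A (n + 1) y = cocycle f A n (f y) * A y := by
  induction n with
  | zero => simp [cocycle]
  | succ n ih =>
    show A (f^[n+1] y) * cocycle f A (n + 1) y = _
    rw [ih, Function.iterate_succ_apply]
    show _ = A (f^[n] (f y)) * cocycle f A n (f y) * A y
    group

lemma stableSet_self {M : Type*} [PseudoMetricSpace M] (f : M → M) (x : M) :
    x ∈ stableSet f x := by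
  have : (fun n : ℕ => dist (f^[n] x) (f^[n] x)) = fun _ => (0 : ℝ) := by
    funext n; exact dist_self _
  rw [stableSet, Set.mem_setOf_eq, this]
  exact tendsto_const_nhds

lemma stableSet_apply {M : Type*} [PseudoMetricSpace M] {f : M → M} {x y : M}
    (hx : f x = x) (hy : y ∈ stableSet f x) : f y ∈ stableSet f x := by
  have h : (fun n : ℕ => dist (f^[n] x) (f^[n] (f y)))
      = (fun n : ℕ => dist (f^[n] x) (f^[n] y)) ∘ (fun n => n + 1) := by
    funext n
    show dist (f^[n] x) (f^[n] (f y)) = dist (f^[n + 1] x) (f^[n + 1] y)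
    rw [Function.iterate_fixed hx, Function.iterate_fixed hx, Function.iterate_succ_apply]
  rw [stableSet, Set.mem_setOf_eq, h]
  exact hy.comp (tendsto_add_atTop_nat 1)

lemma holonomy_equivariance {M : Type*} [MetricSpace M] {d : ℕ}
    (f : M ≃ M) (x : M) (hx : f x = x)
    (A : M → GL (Fin d) ℝ) (HA : M → M → GL (Fin d) ℝ)
    (hHA : ∀ w : M, ∀ y ∈ stableSet (⇑f) w, ∀ z ∈ stableSet (⇑f) w,
      Tendsto (fun n : ℕ =>
          ((((cocycle (⇑f) A n z)⁻¹ * cocycle (⇑f) A n y : GL (Fin d) ℝ)) :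
            Matrix (Fin d) (Fin d) ℝ))
        atTop (𝓝 (HA y z : Matrix (Fin d) (Fin d) ℝ)))
    (y : M) (hy : y ∈ stableSet (⇑f) x) :
    HA x (f y) = A y * HA x y * (A x)⁻¹ := by
  have h1 := hHA x x (stableSet_self _ x) (f y) (stableSet_apply hx hy)
  have h2 := (hHA x x (stableSet_self _ x) y hy).comp (tendsto_add_atTop_nat 1)
  have h3 : Tendsto (fun n : ℕ =>
      ((A y : Matrix (Fin d) (Fin d) ℝ)) *
        (((cocycle (⇑f) A (n + 1) y)⁻¹ * cocycle (⇑f) A (n + 1) x : GL (Fin d) ℝ) :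
          Matrix (Fin d) (Fin d) ℝ) * (((A x)⁻¹ : GL (Fin d) ℝ) : Matrix (Fin d) (Fin d) ℝ))
      atTop (𝓝 ((A y * HA x y * (A x)⁻¹ : GL (Fin d) ℝ) : Matrix (Fin d) (Fin d) ℝ)) := by
    simp only [Units.val_mul]
    exact (h2.const_mul _).mul_const _
  have heq : ∀ n : ℕ,
      (((cocycle (⇑f) A n (f y))⁻¹ * cocycle (⇑f) A n x : GL (Fin d) ℝ) :
        Matrix (Fin d) (Fin d) ℝ)
      = ((A y : Matrix (Fin d) (Fin d) ℝ)) *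
        (((cocycle (⇑f) A (n + 1) y)⁻¹ * cocycle (⇑f) A (n + 1) x : GL (Fin d) ℝ) :
          Matrix (Fin d) (Fin d) ℝ) * (((A x)⁻¹ : GL (Fin d) ℝ) : Matrix (Fin d) (Fin d) ℝ) := by
    intro n
    rw [← Units.val_mul, ← Units.val_mul]
    congr 1
    rw [cocycle_succ' (⇑f) A n y, cocycle_succ' (⇑f) A n x, hx]
    group
  have h1' : Tendsto (fun n : ℕ =>
      ((A y : Matrix (Fin d) (Fin d) ℝ)) *
        (((cocycle (⇑f) A (n + 1) y)⁻¹ * cocycle (⇑f) A (n + 1) x : GL (Fin d) ℝ) :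
          Matrix (Fin d) (Fin d) ℝ) * (((A x)⁻¹ : GL (Fin d) ℝ) : Matrix (Fin d) (Fin d) ℝ))
      atTop (𝓝 (HA x (f y) : Matrix (Fin d) (Fin d) ℝ)) := by
    simpa only [heq] using h1
  exact Units.ext (tendsto_nhds_unique h1' h3)

/-- with `x` a fixed point of `f` and `P(y) = H^{s,A}_{xy}(H^{s,B}_{xy})⁻¹` for
`y ∈ W(x) = W^s(x) ∩ W^u(x)`, the map `P` satisfies `P(f(y)) = A(y) P(y) B(y)⁻¹` on `W(x)`. -/
theorem stmt7 {M : Type*} [MetricSpace M] [CompactSpace M] {d : ℕ}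
    (f : M ≃ M) (C₁ lam ε τ : ℝ) (hf : IsHyperbolic f C₁ lam ε τ)
    (x : M) (hx : f x = x)
    (A B : M → GL (Fin d) ℝ)
    (hA : ∃ K : NNReal, LipschitzWith K fun x => (A x : Matrix (Fin d) (Fin d) ℝ))
    (hB : ∃ K : NNReal, LipschitzWith K fun x => (B x : Matrix (Fin d) (Fin d) ℝ))
    (θ : ℝ) (hθ0 : 0 < θ) (hθ : θ < lam)
    (hFA : FiberBunched (⇑f) A θ) (hFB : FiberBunched (⇑f) B θ)
    (hper : ∀ (p : M) (n : ℕ), 0 < n → (⇑f)^[n] p = p →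
      cocycle (⇑f) A n p = cocycle (⇑f) B n p)
    (HA HB : M → M → GL (Fin d) ℝ)
    (hHA : ∀ w : M, ∀ y ∈ stableSet (⇑f) w, ∀ z ∈ stableSet (⇑f) w,
      Tendsto (fun n : ℕ =>
          ((((cocycle (⇑f) A n z)⁻¹ * cocycle (⇑f) A n y : GL (Fin d) ℝ)) :
            Matrix (Fin d) (Fin d) ℝ))
        atTop (𝓝 (HA y z : Matrix (Fin d) (Fin d) ℝ)))
    (hHB : ∀ w : M, ∀ y ∈ stableSet (⇑f) w, ∀ z ∈ stableSet (⇑f) w,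
      Tendsto (fun n : ℕ =>
          ((((cocycle (⇑f) B n z)⁻¹ * cocycle (⇑f) B n y : GL (Fin d) ℝ)) :
            Matrix (Fin d) (Fin d) ℝ))
        atTop (𝓝 (HB y z : Matrix (Fin d) (Fin d) ℝ))) :
    ∀ y ∈ stableSet (⇑f) x ∩ stableSet (⇑f.symm) x,
      HA x (f y) * (HB x (f y))⁻¹ = A y * (HA x y * (HB x y)⁻¹) * (B y)⁻¹ := by
  intro y hy
  have hys : y ∈ stableSet (⇑f) x := hy.1
  have hAB : A x = B x := by
    have := hper x 1 one_pos (by simp [hx])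
    simpa [cocycle] using this
  have hA' := holonomy_equivariance f x hx A HA hHA y hys
  have hB' := holonomy_equivariance f x hx B HB hHB y hys
  rw [hA', hB', hAB]
  group
end
end

section
/- Let f be a hyperbolic homeomorphism with fixed point x, A and B Lipschitz fiber bunched cocycles with equal periodic data (Aⁿ(p) = Bⁿ(p) whenever fⁿ(p) = p). Then for every y ∈ W^s(x) ∩ W^u(x), the stable and unstable holonomy expressions agree: H^{s,A}_{xy} H^{s,B}_{yx} = H^{u,A}_{xy} H^{u,B}_{yx}. -/
open Filter Topology Metric Matrix
open scoped Matrix.Norms.L2Operator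
noncomputable section

namespace Stmt10Aux
variable {M : Type*} {d : ℕ}

lemma norm_one_le : ‖(1 : Matrix (Fin d) (Fin d) ℝ)‖ ≤ 1 := by
  rw [Matrix.cstar_norm_def, _root_.map_one]
  exact ContinuousLinearMap.norm_id_le

lemma cocycle_add {G : Type*} [Group G] (f : M → M) (A : M → G) (m n : ℕ) (x : M) :
    cocycle f A (m + n) x = cocycle f A n (f^[m] x) * cocycle f A m x := by
  induction n with
  | zero => simp [cocycle]
  | succ n ih =>
      have : m + (n + 1) = (m + n) + 1 := by ring
      rw [this]
      show A (f^[m+n] x) * cocycle f A (m+n) x = _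
      rw [ih]
      show _ = A (f^[n] (f^[m] x)) * cocycle f A n (f^[m] x) * cocycle f A m x
      rw [← Function.iterate_add_apply f n m x, Nat.add_comm n m, mul_assoc]

end Stmt10Aux
namespace Stmt10Aux2
open Stmt10Aux
variable {M : Type*} {d : ℕ}

lemma zcocycle_neg_nat {G : Type*} [Group G] (f : M ≃ M) (A : M → G) (n : ℕ) (w : M) :
    zcocycle f A (-(n : ℤ)) w = (cocycle (⇑f) A n ((⇑f.symm)^[n] w))⁻¹ := by
  cases n with
  | zero => simp [zcocycle, cocycle]
  | succ m =>
      have : (-(((m : ℕ) + 1 : ℕ) : ℤ)) = Int.negSucc m := rfl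
      rw [this]
      rfl

lemma iterate_symm_iterate (f : M ≃ M) (n : ℕ) (w : M) :
    (⇑f.symm)^[n] ((⇑f)^[n] w) = w :=
  Function.LeftInverse.iterate f.symm_apply_apply n w

lemma iterate_iterate_symm (f : M ≃ M) (n : ℕ) (w : M) :
    (⇑f)^[n] ((⇑f.symm)^[n] w) = w :=
  Function.LeftInverse.iterate f.apply_symm_apply n w

lemma iterate_symm_of_le (f : M ≃ M) {k n : ℕ} (h : k ≤ n) (w : M) :
    (⇑f.symm)^[k] ((⇑f)^[n] w) = (⇑f)^[n - k] w := by
  conv_lhs => rw [show n = k + (n - k) by omega, Function.iterate_add_apply]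
  rw [iterate_symm_iterate f k]

lemma iterate_symm_periodic (f : M ≃ M) {k n : ℕ} (h : k ≤ n) {p : M}
    (hp : (⇑f)^[n] p = p) : (⇑f.symm)^[k] p = (⇑f)^[n - k] p := by
  conv_lhs => rw [← hp]
  exact iterate_symm_of_le f h p

/-- the reversed cocycle generator -/
def rgen (f : M ≃ M) (A : M → GL (Fin d) ℝ) : M → GL (Fin d) ℝ :=
  fun w => (A (f.symm w))⁻¹

lemma cocycle_rgen (f : M ≃ M) (A : M → GL (Fin d) ℝ) (n : ℕ) (w : M) :
    cocycle (⇑f.symm) (rgen f A) n w = (cocycle (⇑f) A n ((⇑f.symm)^[n] w))⁻¹ := by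
  induction n with
  | zero => simp [cocycle]
  | succ n ih =>
      show rgen f A ((⇑f.symm)^[n] w) * cocycle (⇑f.symm) (rgen f A) n w = _
      rw [ih]
      have h1 : cocycle (⇑f) A (n + 1) ((⇑f.symm)^[n+1] w)
          = cocycle (⇑f) A n ((⇑f)^[1] ((⇑f.symm)^[n+1] w)) * cocycle (⇑f) A 1 ((⇑f.symm)^[n+1] w) := by
        rw [← cocycle_add]; ring_nf
      have h2 : (⇑f)^[1] ((⇑f.symm)^[n+1] w) = (⇑f.symm)^[n] w := by
        show f ((⇑f.symm)^[n+1] w) = _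
        rw [show n + 1 = n.succ from rfl, Function.iterate_succ_apply' ]
        exact f.apply_symm_apply _
      rw [h1, h2]
      have h3 : cocycle (⇑f) A 1 ((⇑f.symm)^[n+1] w) = A ((⇑f.symm)^[n+1] w) := by
        simp [cocycle]
      rw [h3, _root_.mul_inv_rev]
      congr 1
      · rw [show ((⇑f.symm)^[n+1] w) = f.symm ((⇑f.symm)^[n] w) from
          Function.iterate_succ_apply' _ _ _]
        rfl
  
end Stmt10Aux2

namespace Stmt10Key
open Stmt10Aux Stmt10Aux2
variable {M : Type*} {d : ℕ}

local notation "𝕄" => Matrix (Fin d) (Fin d) ℝ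

lemma conj_sub_lemma (a b x y : Matrix (Fin d) (Fin d) ℝ) (h : a * b = 1) :
    a * x * (b * y) - y = a * (x - 1) * b * y := by
  have h2 : a * (x - 1) * b * y = a * x * (b * y) - a * b * y := by noncomm_ring
  rw [h2, h, one_mul]

lemma key (g : M → M) (G : M → GL (Fin d) ℝ) (u v : M) (n : ℕ) (c ρ : ℝ)
    (hc : 0 ≤ c) (hρ : 0 < ρ)
    (hb : ∀ j < n, gnorm (cocycle g G j v) * gnorm ((cocycle g G j v)⁻¹) *
      ‖((((G (g^[j] v))⁻¹ * G (g^[j] u) : GL (Fin d) ℝ) : 𝕄)) - 1‖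
      ≤ c * Real.exp (-ρ * j)) :
    ‖(((cocycle g G n v)⁻¹ * cocycle g G n u : GL (Fin d) ℝ) : 𝕄) - 1‖
      ≤ c * (1 - Real.exp (-ρ))⁻¹ * Real.exp (c * (1 - Real.exp (-ρ))⁻¹) := by
  have hr1 : Real.exp (-ρ) < 1 := Real.exp_lt_one_iff.mpr (by linarith)
  have hr0 : 0 < Real.exp (-ρ) := Real.exp_pos _
  set S : ℝ := (1 - Real.exp (-ρ))⁻¹ with hS
  have hSpos : 0 < S := inv_pos.mpr (by linarith)
  set D : ℕ → 𝕄 := fun j => (((cocycle g G j v)⁻¹ * cocycle g G j u : GL (Fin d) ℝ) : 𝕄) with hD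
  set T : ℕ → ℝ := fun j => ∑ i ∈ Finset.range j, Real.exp (-ρ * i) with hT
  have hTS : ∀ j, T j ≤ S := by
    intro j
    have hgeom : T j = ∑ i ∈ Finset.range j, (Real.exp (-ρ))^i := by
      apply Finset.sum_congr rfl
      intro i _
      rw [← Real.exp_nat_mul]
      ring_nf
    have hmul := geom_sum_mul (Real.exp (-ρ)) j
    have hpos : (0:ℝ) < 1 - Real.exp (-ρ) := by linarith
    rw [hS, ← one_div, le_div_iff₀ hpos, hgeom]
    nlinarith [pow_pos hr0 j]
  have hTnonneg : ∀ j, 0 ≤ T j := fun j =>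
    Finset.sum_nonneg fun i _ => (Real.exp_pos _).le
  have hD0 : D 0 = 1 := by simp [hD, cocycle]
  -- step identity
  have hstep : ∀ j, D (j+1) =
      (((cocycle g G j v)⁻¹ : GL (Fin d) ℝ) : 𝕄) *
        ((((G (g^[j] v))⁻¹ * G (g^[j] u) : GL (Fin d) ℝ)) : 𝕄) *
        (((cocycle g G j v : GL (Fin d) ℝ) : 𝕄) * D j) := by
    intro j
    have hgl : ((cocycle g G (j+1) v)⁻¹ * cocycle g G (j+1) u : GL (Fin d) ℝ)
        = (cocycle g G j v)⁻¹ * ((G (g^[j] v))⁻¹ * G (g^[j] u)) *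
          (cocycle g G j v * ((cocycle g G j v)⁻¹ * cocycle g G j u)) := by
      show ((G (g^[j] v) * cocycle g G j v)⁻¹ * (G (g^[j] u) * cocycle g G j u) : GL (Fin d) ℝ) = _
      group
    show (((cocycle g G (j+1) v)⁻¹ * cocycle g G (j+1) u : GL (Fin d) ℝ) : 𝕄) = _
    rw [hgl]
    simp only [Units.val_mul]
    noncomm_ring
  have hdiff : ∀ j, D (j+1) - D j =
      (((cocycle g G j v)⁻¹ : GL (Fin d) ℝ) : 𝕄) *
        (((((G (g^[j] v))⁻¹ * G (g^[j] u) : GL (Fin d) ℝ)) : 𝕄) - 1) *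
        ((cocycle g G j v : GL (Fin d) ℝ) : 𝕄) * D j := by
    intro j
    rw [hstep j]
    exact conj_sub_lemma _ _ _ _ (Units.inv_mul _)
  have hnormdiff : ∀ j < n, ‖D (j+1) - D j‖ ≤ c * Real.exp (-ρ * j) * ‖D j‖ := by
    intro j hj
    rw [hdiff j]
    calc ‖_ * _ * _ * D j‖
        ≤ ‖(((cocycle g G j v)⁻¹ : GL (Fin d) ℝ) : 𝕄) *
            (((((G (g^[j] v))⁻¹ * G (g^[j] u) : GL (Fin d) ℝ)) : 𝕄) - 1) *
            ((cocycle g G j v : GL (Fin d) ℝ) : 𝕄)‖ * ‖D j‖ := norm_mul_le _ _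
      _ ≤ (gnorm (cocycle g G j v) * gnorm ((cocycle g G j v)⁻¹) *
            ‖((((G (g^[j] v))⁻¹ * G (g^[j] u) : GL (Fin d) ℝ)) : 𝕄) - 1‖) * ‖D j‖ := by
          apply mul_le_mul_of_nonneg_right _ (norm_nonneg _)
          calc ‖_ * _ * _‖ ≤ ‖(((cocycle g G j v)⁻¹ : GL (Fin d) ℝ) : 𝕄) *
                (((((G (g^[j] v))⁻¹ * G (g^[j] u) : GL (Fin d) ℝ)) : 𝕄) - 1)‖ *
                ‖((cocycle g G j v : GL (Fin d) ℝ) : 𝕄)‖ := norm_mul_le _ _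
            _ ≤ ‖(((cocycle g G j v)⁻¹ : GL (Fin d) ℝ) : 𝕄)‖ *
                ‖(((((G (g^[j] v))⁻¹ * G (g^[j] u) : GL (Fin d) ℝ)) : 𝕄) - 1)‖ *
                ‖((cocycle g G j v : GL (Fin d) ℝ) : 𝕄)‖ := by
                apply mul_le_mul_of_nonneg_right (norm_mul_le _ _) (norm_nonneg _)
            _ = gnorm (cocycle g G j v) * gnorm ((cocycle g G j v)⁻¹) *
                ‖((((G (g^[j] v))⁻¹ * G (g^[j] u) : GL (Fin d) ℝ)) : 𝕄) - 1‖ := by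
                unfold gnorm; ring
      _ ≤ c * Real.exp (-ρ * j) * ‖D j‖ :=
          mul_le_mul_of_nonneg_right (hb j hj) (norm_nonneg _)
  have hDbound : ∀ j ≤ n, ‖D j‖ ≤ Real.exp (c * T j) := by
    intro j
    induction j with
    | zero =>
        intro _
        rw [hD0]
        have : T 0 = 0 := by simp [hT]
        rw [this]
        simpa using norm_one_le (d := d)
    | succ j ih =>
        intro hj
        have hj' : j ≤ n := le_of_lt (Nat.lt_of_succ_le hj)
        have hjn : j < n := Nat.lt_of_succ_le hj
        have h1 : ‖D (j+1)‖ ≤ ‖D j‖ + ‖D (j+1) - D j‖ := by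
          have := norm_add_le (D j) (D (j+1) - D j)
          simpa using this
        have h2 := hnormdiff j hjn
        have h3 := ih hj'
        have hexp : (1 + c * Real.exp (-ρ * j)) * Real.exp (c * T j) ≤ Real.exp (c * T (j+1)) := by
          have hTsucc : T (j+1) = T j + Real.exp (-ρ * j) := by
            rw [hT]; exact Finset.sum_range_succ _ _
          rw [hTsucc, mul_add, Real.exp_add]
          apply mul_le_mul_of_nonneg_right _ (Real.exp_pos _).le |>.trans_eq (mul_comm _ _)
          have := Real.add_one_le_exp (c * Real.exp (-ρ * j))
          linarith
        have hDjnn : (0:ℝ) ≤ ‖D j‖ := norm_nonneg _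
        have hcnn : (0:ℝ) ≤ c * Real.exp (-ρ * j) := mul_nonneg hc (Real.exp_pos _).le
        calc ‖D (j+1)‖ ≤ ‖D j‖ + c * Real.exp (-ρ * j) * ‖D j‖ := by linarith
          _ = (1 + c * Real.exp (-ρ * j)) * ‖D j‖ := by ring
          _ ≤ (1 + c * Real.exp (-ρ * j)) * Real.exp (c * T j) := by nlinarith
          _ ≤ Real.exp (c * T (j+1)) := hexp
  -- telescoping
  have htel : D n - 1 = ∑ j ∈ Finset.range n, (D (j+1) - D j) := by
    rw [Finset.sum_range_sub, hD0]
  have hfinal : ‖D n - 1‖ ≤ ∑ j ∈ Finset.range n, c * Real.exp (-ρ * j) * Real.exp (c * S) := by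
    rw [htel]
    refine (norm_sum_le _ _).trans (Finset.sum_le_sum ?_)
    intro j hj
    rw [Finset.mem_range] at hj
    calc ‖D (j+1) - D j‖ ≤ c * Real.exp (-ρ * j) * ‖D j‖ := hnormdiff j hj
      _ ≤ c * Real.exp (-ρ * j) * Real.exp (c * S) := by
          apply mul_le_mul_of_nonneg_left _ (mul_nonneg hc (Real.exp_pos _).le)
          refine (hDbound j (le_of_lt hj)).trans (Real.exp_le_exp.mpr ?_)
          exact mul_le_mul_of_nonneg_left (hTS j) hc
  refine hfinal.trans ?_
  rw [← Finset.sum_mul, ← Finset.mul_sum]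
  have : c * T n * Real.exp (c * S) ≤ c * S * Real.exp (c * S) := by
    have := hTS n
    have h1 : c * T n ≤ c * S := mul_le_mul_of_nonneg_left this hc
    nlinarith [Real.exp_pos (c * S)]
  calc c * T n * Real.exp (c*S) ≤ c * S * Real.exp (c * S) := this

lemma inv_near_one (u : GL (Fin d) ℝ) (h : ‖((u : 𝕄)) - 1‖ ≤ 1/2) :
    ‖(((u⁻¹ : GL (Fin d) ℝ)) : 𝕄) - 1‖ ≤ 2 * ‖((u : 𝕄)) - 1‖ := by
  have hid : (((u⁻¹ : GL (Fin d) ℝ)) : 𝕄) - 1 = (((u⁻¹ : GL (Fin d) ℝ)) : 𝕄) * (1 - (u : 𝕄)) := by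
    rw [mul_sub, mul_one, Units.inv_mul]
  set t := ‖(((u⁻¹ : GL (Fin d) ℝ)) : 𝕄) - 1‖ with ht
  set s := ‖((u : 𝕄)) - 1‖ with hs
  have hsrev : ‖(1 : 𝕄) - (u : 𝕄)‖ = s := norm_sub_rev _ _
  have h1 : t ≤ ‖(((u⁻¹ : GL (Fin d) ℝ)) : 𝕄)‖ * s := by
    rw [ht, hid, ← hsrev]
    exact norm_mul_le _ _
  have h2 : ‖(((u⁻¹ : GL (Fin d) ℝ)) : 𝕄)‖ ≤ t + 1 := by
    calc ‖(((u⁻¹ : GL (Fin d) ℝ)) : 𝕄)‖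
        = ‖((((u⁻¹ : GL (Fin d) ℝ)) : 𝕄) - 1) + 1‖ := by rw [sub_add_cancel]
      _ ≤ t + ‖(1:𝕄)‖ := norm_add_le _ _
      _ ≤ t + 1 := by have := norm_one_le (d := d); linarith
  have hsnn : 0 ≤ s := norm_nonneg _
  have htnn : 0 ≤ t := norm_nonneg _
  nlinarith [h1, h2, h]

lemma conj_sub_one (g X : GL (Fin d) ℝ) :
    (((g⁻¹ * X * g : GL (Fin d) ℝ)) : 𝕄) - 1
      = ((g⁻¹ : GL (Fin d) ℝ) : 𝕄) * ((X : 𝕄) - 1) * ((g : GL (Fin d) ℝ) : 𝕄) := by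
  simp only [Units.val_mul]
  rw [mul_sub, mul_one, sub_mul, Units.inv_mul]

lemma conj_sub_one' (g X : GL (Fin d) ℝ) :
    (((g * X * g⁻¹ : GL (Fin d) ℝ)) : 𝕄) - 1
      = ((g : GL (Fin d) ℝ) : 𝕄) * ((X : 𝕄) - 1) * ((g⁻¹ : GL (Fin d) ℝ) : 𝕄) := by
  simp only [Units.val_mul]
  rw [mul_sub, mul_one, sub_mul, Units.mul_inv]

lemma conj_norm_bound (g X : GL (Fin d) ℝ) :
    ‖(((g⁻¹ * X * g : GL (Fin d) ℝ)) : 𝕄) - 1‖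
      ≤ gnorm g * gnorm g⁻¹ * ‖(X : 𝕄) - 1‖ := by
  rw [conj_sub_one]
  calc ‖_ * _ * _‖ ≤ ‖((g⁻¹ : GL (Fin d) ℝ) : 𝕄) * ((X : 𝕄) - 1)‖ * ‖((g : GL (Fin d) ℝ) : 𝕄)‖ :=
        norm_mul_le _ _
    _ ≤ ‖((g⁻¹ : GL (Fin d) ℝ) : 𝕄)‖ * ‖(X : 𝕄) - 1‖ * ‖((g : GL (Fin d) ℝ) : 𝕄)‖ :=
        mul_le_mul_of_nonneg_right (norm_mul_le _ _) (norm_nonneg _)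
    _ = gnorm g * gnorm g⁻¹ * ‖(X : 𝕄) - 1‖ := by unfold gnorm; ring

lemma conj_norm_bound' (g X : GL (Fin d) ℝ) :
    ‖(((g * X * g⁻¹ : GL (Fin d) ℝ)) : 𝕄) - 1‖
      ≤ gnorm g * gnorm g⁻¹ * ‖(X : 𝕄) - 1‖ := by
  rw [conj_sub_one']
  calc ‖_ * _ * _‖ ≤ ‖((g : GL (Fin d) ℝ) : 𝕄) * ((X : 𝕄) - 1)‖ * ‖((g⁻¹ : GL (Fin d) ℝ) : 𝕄)‖ :=
        norm_mul_le _ _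
    _ ≤ ‖((g : GL (Fin d) ℝ) : 𝕄)‖ * ‖(X : 𝕄) - 1‖ * ‖((g⁻¹ : GL (Fin d) ℝ) : 𝕄)‖ :=
        mul_le_mul_of_nonneg_right (norm_mul_le _ _) (norm_nonneg _)
    _ = gnorm g * gnorm g⁻¹ * ‖(X : 𝕄) - 1‖ := by unfold gnorm; ring

lemma norm_le_one_add (m : Matrix (Fin d) (Fin d) ℝ) : ‖m‖ ≤ 1 + ‖m - 1‖ := by
  calc ‖m‖ = ‖(m - 1) + 1‖ := by rw [sub_add_cancel]
    _ ≤ ‖m - 1‖ + ‖(1 : Matrix (Fin d) (Fin d) ℝ)‖ := norm_add_le _ _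
    _ ≤ 1 + ‖m - 1‖ := by have := Stmt10Aux.norm_one_le (d := d); linarith

lemma key_step_bound {C₃ L C₅ dn Cc θ δ : ℝ} {G P E D : ℝ} (j : ℕ)
    (hGP : G * P ≤ C₃ * Real.exp (θ * j))
    (hE : E ≤ L * D)
    (hD : D ≤ C₅ * Real.exp (-(θ+δ)*j) * dn)
    (hG : 0 ≤ G) (hP : 0 ≤ P) (hE0 : 0 ≤ E) (hL : 0 ≤ L) (hC₅ : 0 ≤ C₅) (hdn : 0 ≤ dn)
    (hCc : C₃ * (L * C₅) ≤ Cc) (hC₃ : 0 < C₃) :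
    G * P * E ≤ Cc * dn * Real.exp (-δ * j) := by
  have hexp : Real.exp (θ*j) * Real.exp (-(θ+δ)*j) = Real.exp (-δ*j) := by
    rw [← Real.exp_add]
    ring_nf
  calc G*P*E ≤ (C₃ * Real.exp (θ*j)) * (L * (C₅ * Real.exp (-(θ+δ)*j) * dn)) := by
        apply mul_le_mul hGP (hE.trans (mul_le_mul_of_nonneg_left hD hL)) hE0 (by positivity)
    _ = (C₃ * (L * C₅)) * dn * (Real.exp (θ*j) * Real.exp (-(θ+δ)*j)) := by ring
    _ = (C₃ * (L*C₅)) * dn * Real.exp (-δ*j) := by rw [hexp]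
    _ ≤ Cc * dn * Real.exp (-δ*j) := by
        apply mul_le_mul_of_nonneg_right (mul_le_mul_of_nonneg_right hCc hdn) (Real.exp_pos _).le

lemma step_bound₁ {M : Type*} [MetricSpace M] (A : M → GL (Fin d) ℝ) (K : NNReal)
    (hK : LipschitzWith K fun x => (A x : 𝕄)) (J : ℝ)
    (hJ : ∀ w, ‖(((A w)⁻¹ : GL (Fin d) ℝ) : 𝕄)‖ ≤ J) (u v : M) :
    ‖(((A v)⁻¹ * A u : GL (Fin d) ℝ) : 𝕄) - 1‖ ≤ J * (K : ℝ) * dist u v := by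
  have hid : (((A v)⁻¹ * A u : GL (Fin d) ℝ) : 𝕄) - 1
      = (((A v)⁻¹ : GL (Fin d) ℝ) : 𝕄) * ((A u : 𝕄) - (A v : 𝕄)) := by
    rw [Units.val_mul, mul_sub]
    rw [Units.inv_mul]
  rw [hid]
  have hdist : ‖(A u : 𝕄) - (A v : 𝕄)‖ ≤ (K : ℝ) * dist u v := by
    have := hK.dist_le_mul u v
    rwa [dist_eq_norm] at this
  calc ‖_ * _‖ ≤ ‖(((A v)⁻¹ : GL (Fin d) ℝ) : 𝕄)‖ * ‖(A u : 𝕄) - (A v : 𝕄)‖ := norm_mul_le _ _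
    _ ≤ J * ((K : ℝ) * dist u v) := by
        apply mul_le_mul (hJ v) hdist (norm_nonneg _) (le_trans (norm_nonneg _) (hJ v))
    _ = J * (K : ℝ) * dist u v := by ring

lemma step_bound₂ {M : Type*} [MetricSpace M] (A : M → GL (Fin d) ℝ) (K : NNReal)
    (hK : LipschitzWith K fun x => (A x : 𝕄)) (J : ℝ)
    (hJ : ∀ w, ‖(((A w)⁻¹ : GL (Fin d) ℝ) : 𝕄)‖ ≤ J) (u v : M) :
    ‖((A v * (A u)⁻¹ : GL (Fin d) ℝ) : 𝕄) - 1‖ ≤ J * (K : ℝ) * dist u v := by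
  have hid : ((A v * (A u)⁻¹ : GL (Fin d) ℝ) : 𝕄) - 1
      = ((A v : 𝕄) - (A u : 𝕄)) * (((A u)⁻¹ : GL (Fin d) ℝ) : 𝕄) := by
    rw [Units.val_mul, sub_mul]
    rw [Units.mul_inv]
  rw [hid]
  have hdist : ‖(A v : 𝕄) - (A u : 𝕄)‖ ≤ (K : ℝ) * dist u v := by
    have := hK.dist_le_mul v u
    rw [dist_eq_norm] at this
    rwa [dist_comm] at this
  calc ‖_ * _‖ ≤ ‖(A v : 𝕄) - (A u : 𝕄)‖ * ‖(((A u)⁻¹ : GL (Fin d) ℝ) : 𝕄)‖ := norm_mul_le _ _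
    _ ≤ ((K : ℝ) * dist u v) * J := by
        apply mul_le_mul hdist (hJ u) (norm_nonneg _) (by positivity)
    _ = J * (K : ℝ) * dist u v := by ring

end Stmt10Key

namespace Stmt10Stable
open Filter Topology Metric

lemma exp_stable {M : Type*} [MetricSpace M] (g : M → M) (C₁ lam ε : ℝ)
    (hC₁ : 0 < C₁) (hlam : 0 < lam) (hε : 0 < ε)
    (hcontr : ∀ x y z, y ∈ localStable g ε x → z ∈ localStable g ε x →
      ∀ n : ℕ, dist (g^[n] y) (g^[n] z) ≤ C₁ * Real.exp (-lam * n) * dist y z)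
    (x : M) (hx : g x = x) (y : M)
    (hy : Tendsto (fun n : ℕ => dist x (g^[n] y)) atTop (𝓝 0)) :
    ∃ C > 0, ∀ n : ℕ, dist x (g^[n] y) ≤ C * Real.exp (-lam * n) := by
  have hxit : ∀ m : ℕ, g^[m] x = x := fun m => Function.iterate_fixed hx m
  have hev : ∀ᶠ n : ℕ in atTop, dist x (g^[n] y) < ε := by
    have := hy (Iio_mem_nhds hε)
    simpa using this
  obtain ⟨N, hN⟩ := eventually_atTop.mp hev
  set w := g^[N] y with hw
  have hwit : ∀ m : ℕ, g^[m] w = g^[m + N] y := by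
    intro m; rw [hw, ← Function.iterate_add_apply]
  have hwloc : w ∈ localStable g ε x := by
    intro m
    rw [hxit m, hwit m]
    exact (hN (m + N) (Nat.le_add_left _ _)).le
  have hxloc : x ∈ localStable g ε x := by
    intro m
    rw [hxit m]
    simp [hε.le]
  have hcon := hcontr x x w hxloc hwloc
  have hne : (Finset.range (N+1)).Nonempty := ⟨0, by simp⟩
  set Dmax := (Finset.range (N+1)).sup' hne (fun n => dist x (g^[n] y)) with hDmax
  have hDnn : 0 ≤ Dmax := le_trans dist_nonneg
    (Finset.le_sup' (fun n => dist x (g^[n] y)) (by simp : 0 ∈ Finset.range (N+1)))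
  refine ⟨Real.exp (lam * N) * (C₁ * dist x w + Dmax + 1), by positivity, ?_⟩
  intro n
  rcases le_or_gt n N with hn | hn
  · have hle : dist x (g^[n] y) ≤ Dmax :=
      Finset.le_sup' (fun n => dist x (g^[n] y)) (Finset.mem_range.mpr (by omega))
    have h1 : (1:ℝ) ≤ Real.exp (lam * N) * Real.exp (-lam * n) := by
      rw [← Real.exp_add]
      refine Real.one_le_exp ?_
      have : (n:ℝ) ≤ N := by exact_mod_cast hn
      nlinarith
    have h2 : 0 ≤ C₁ * dist x w := by positivity
    nlinarith
  · have hm : g^[n - N] w = g^[n] y := by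
      rw [hwit]; congr 1; omega
    have := hcon (n - N)
    rw [hxit (n - N), hm] at this
    have hcast : ((n - N : ℕ) : ℝ) = (n:ℝ) - N := by
      have : N ≤ n := hn.le
      push_cast [Nat.cast_sub this]
      ring
    rw [hcast] at this
    have hexp : C₁ * Real.exp (-lam * ((n:ℝ) - N)) * dist x w
        = Real.exp (lam * N) * (C₁ * dist x w) * Real.exp (-lam * n) := by
      have hsplit : Real.exp (-lam * ((n:ℝ) - N)) = Real.exp (lam * N) * Real.exp (-lam * n) := by
        rw [← Real.exp_add]; ring_nf
      rw [hsplit]; ring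
    rw [hexp] at this
    have h2 : 0 ≤ Real.exp (lam * N) * Real.exp (-lam * n) := by positivity
    nlinarith [Real.exp_pos (lam * N), Real.exp_pos (-lam * (n:ℝ))]

end Stmt10Stable

open Stmt10Aux Stmt10Aux2 in
set_option maxHeartbeats 2000000 in
/-- for `y ∈ W(x) = W^s(x) ∩ W^u(x)` (`x` a fixed point), the stable and
unstable holonomy expressions agree: `H^{s,A}_{xy} H^{s,B}_{yx} = H^{u,A}_{xy} H^{u,B}_{yx}`. -/
theorem stmt10 {M : Type*} [MetricSpace M] [CompactSpace M] {d : ℕ}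
    (f : M ≃ M) (C₁ lam ε τ : ℝ) (hf : IsHyperbolic f C₁ lam ε τ)
    (x : M) (hx : f x = x)
    (A B : M → GL (Fin d) ℝ)
    (hA : ∃ K : NNReal, LipschitzWith K fun x => (A x : Matrix (Fin d) (Fin d) ℝ))
    (hB : ∃ K : NNReal, LipschitzWith K fun x => (B x : Matrix (Fin d) (Fin d) ℝ))
    (θ : ℝ) (hθ0 : 0 < θ) (hθ : θ < lam)
    (hFA : FiberBunched (⇑f) A θ) (hFB : FiberBunched (⇑f) B θ)
    (hper : ∀ (p : M) (n : ℕ), 0 < n → (⇑f)^[n] p = p →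
      cocycle (⇑f) A n p = cocycle (⇑f) B n p)
    -- the Anosov closing lemma for `f`
    (hclose : ∀ δ : ℝ, 0 < δ → θ + δ < lam → ∃ C₅ > (0 : ℝ), ∃ ε₀ > (0 : ℝ),
      ∀ (z : M) (n : ℕ), dist ((⇑f)^[n] z) z < ε₀ → ∃ p : M, (⇑f)^[n] p = p ∧
        ∀ j ≤ n, dist ((⇑f)^[j] z) ((⇑f)^[j] p) ≤
          C₅ * Real.exp (-(θ + δ) * (↑(min j (n - j)) : ℝ)) * dist ((⇑f)^[n] z) z)
    -- the stable and unstable holonomies of `A` and `B`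
    (HsA HsB HuA HuB : M → M → GL (Fin d) ℝ)
    (hHsA : ∀ w : M, ∀ y ∈ stableSet (⇑f) w, ∀ z ∈ stableSet (⇑f) w,
      Tendsto (fun n : ℕ =>
          ((((cocycle (⇑f) A n z)⁻¹ * cocycle (⇑f) A n y : GL (Fin d) ℝ)) :
            Matrix (Fin d) (Fin d) ℝ))
        atTop (𝓝 (HsA y z : Matrix (Fin d) (Fin d) ℝ)))
    (hHsB : ∀ w : M, ∀ y ∈ stableSet (⇑f) w, ∀ z ∈ stableSet (⇑f) w,
      Tendsto (fun n : ℕ =>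
          ((((cocycle (⇑f) B n z)⁻¹ * cocycle (⇑f) B n y : GL (Fin d) ℝ)) :
            Matrix (Fin d) (Fin d) ℝ))
        atTop (𝓝 (HsB y z : Matrix (Fin d) (Fin d) ℝ)))
    (hHuA : ∀ w : M, ∀ y ∈ stableSet (⇑f.symm) w, ∀ z ∈ stableSet (⇑f.symm) w,
      Tendsto (fun n : ℕ =>
          ((((zcocycle f A (-(n : ℤ)) z)⁻¹ * zcocycle f A (-(n : ℤ)) y : GL (Fin d) ℝ)) :
            Matrix (Fin d) (Fin d) ℝ))
        atTop (𝓝 (HuA y z : Matrix (Fin d) (Fin d) ℝ)))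
    (hHuB : ∀ w : M, ∀ y ∈ stableSet (⇑f.symm) w, ∀ z ∈ stableSet (⇑f.symm) w,
      Tendsto (fun n : ℕ =>
          ((((zcocycle f B (-(n : ℤ)) z)⁻¹ * zcocycle f B (-(n : ℤ)) y : GL (Fin d) ℝ)) :
            Matrix (Fin d) (Fin d) ℝ))
        atTop (𝓝 (HuB y z : Matrix (Fin d) (Fin d) ℝ))) :
    ∀ y ∈ stableSet (⇑f) x ∩ stableSet (⇑f.symm) x,
      HsA x y * HsB y x = HuA x y * HuB y x := by
  intro y hy
  obtain ⟨hys, hyu⟩ := hy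
  rcases Nat.eq_zero_or_pos d with hd0 | hd
  · subst hd0
    refine Units.ext ?_
    ext i j
    exact i.elim0
  haveI : Nonempty M := ⟨y⟩
  -- fixed point facts
  have hxs : f.symm x = x := by
    conv_lhs => rw [← hx]
    exact f.symm_apply_apply x
  have hxit : ∀ n : ℕ, (⇑f)^[n] x = x := fun n => Function.iterate_fixed hx n
  have hxsit : ∀ n : ℕ, (⇑f.symm)^[n] x = x := fun n => Function.iterate_fixed hxs n
  have hABx : ∀ n : ℕ, cocycle (⇑f) A n x = cocycle (⇑f) B n x := by
    intro n
    cases n with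
    | zero => rfl
    | succ m => exact hper x (m+1) (Nat.succ_pos m) (hxit (m+1))
  have hxsSelf : x ∈ stableSet (⇑f) x := by
    have h0 : (fun n : ℕ => dist ((⇑f)^[n] x) ((⇑f)^[n] x)) = fun _ => (0:ℝ) := by
      funext n; simp
    show Tendsto _ atTop (𝓝 0)
    rw [h0]
    exact tendsto_const_nhds
  have hxuSelf : x ∈ stableSet (⇑f.symm) x := by
    have h0 : (fun n : ℕ => dist ((⇑f.symm)^[n] x) ((⇑f.symm)^[n] x)) = fun _ => (0:ℝ) := by
      funext n; simp
    show Tendsto _ atTop (𝓝 0)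
    rw [h0]
    exact tendsto_const_nhds
  -- the four limits
  have hs1 := hHsA x x hxsSelf y hys
  have hs2 := hHsB x y hys x hxsSelf
  have hu1 := hHuA x x hxuSelf y hyu
  have hu2 := hHuB x y hyu x hxuSelf
  set Ls : Matrix (Fin d) (Fin d) ℝ := (HsA x y : Matrix (Fin d) (Fin d) ℝ) * (HsB y x : Matrix (Fin d) (Fin d) ℝ) with hLs
  set Lu : Matrix (Fin d) (Fin d) ℝ := (HuA x y : Matrix (Fin d) (Fin d) ℝ) * (HuB y x : Matrix (Fin d) (Fin d) ℝ) with hLu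
  set Sseq : ℕ → Matrix (Fin d) (Fin d) ℝ :=
    fun n => (((cocycle (⇑f) A n y)⁻¹ * cocycle (⇑f) B n y : GL (Fin d) ℝ) : Matrix (Fin d) (Fin d) ℝ) with hSseq
  set Useq : ℕ → Matrix (Fin d) (Fin d) ℝ :=
    fun n => ((cocycle (⇑f) A n ((⇑f.symm)^[n] y) *
      (cocycle (⇑f) B n ((⇑f.symm)^[n] y))⁻¹ : GL (Fin d) ℝ) : Matrix (Fin d) (Fin d) ℝ) with hUseq
  have hSlim : Tendsto Sseq atTop (𝓝 Ls) := by
    have heq : Sseq = fun n =>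
        (((cocycle (⇑f) A n y)⁻¹ * cocycle (⇑f) A n x : GL (Fin d) ℝ) : Matrix (Fin d) (Fin d) ℝ) *
        (((cocycle (⇑f) B n x)⁻¹ * cocycle (⇑f) B n y : GL (Fin d) ℝ) : Matrix (Fin d) (Fin d) ℝ) := by
      funext n
      simp only [hSseq]
      rw [← Units.val_mul]
      congr 1
      rw [hABx n]
      group
    rw [heq, hLs]
    exact hs1.mul hs2
  have hUlim : Tendsto Useq atTop (𝓝 Lu) := by
    have heq : Useq = fun n : ℕ =>
        (((zcocycle f A (-(n:ℤ)) y)⁻¹ * zcocycle f A (-(n:ℤ)) x : GL (Fin d) ℝ) : Matrix (Fin d) (Fin d) ℝ) *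
        (((zcocycle f B (-(n:ℤ)) x)⁻¹ * zcocycle f B (-(n:ℤ)) y : GL (Fin d) ℝ) : Matrix (Fin d) (Fin d) ℝ) := by
      funext n
      simp only [hUseq]
      rw [← Units.val_mul]
      congr 1
      rw [zcocycle_neg_nat f A n y, zcocycle_neg_nat f A n x,
        zcocycle_neg_nat f B n x, zcocycle_neg_nat f B n y, hxsit n, ← hABx n]
      group
    rw [heq, hLu]
    exact hu1.mul hu2
  -- constants
  obtain ⟨KA, hKA⟩ := hA
  obtain ⟨KB, hKB⟩ := hB
  obtain ⟨C₃A, hC₃A, hFA'⟩ := hFA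
  obtain ⟨C₃B, hC₃B, hFB'⟩ := hFB
  have hc1A : ∀ w, cocycle (⇑f) A 1 w = A w := fun w => by
    show A ((⇑f)^[0] w) * cocycle (⇑f) A 0 w = A w
    show A w * (1 : GL (Fin d) ℝ) = A w
    rw [mul_one]
  have hc1B : ∀ w, cocycle (⇑f) B 1 w = B w := fun w => by
    show B ((⇑f)^[0] w) * cocycle (⇑f) B 0 w = B w
    show B w * (1 : GL (Fin d) ℝ) = B w
    rw [mul_one]
  have hone_ne : (1 : Matrix (Fin d) (Fin d) ℝ) ≠ 0 := by
    intro h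
    have h2 := congrFun (congrFun h ⟨0, hd⟩) ⟨0, hd⟩
    rw [Matrix.one_apply_eq] at h2
    exact one_ne_zero h2
  have hAne : ∀ w, ((A w : Matrix (Fin d) (Fin d) ℝ)) ≠ 0 := by
    intro w h
    apply hone_ne
    have h2 := Units.inv_mul (A w)
    rw [h, mul_zero] at h2
    exact h2.symm
  have hBne : ∀ w, ((B w : Matrix (Fin d) (Fin d) ℝ)) ≠ 0 := by
    intro w h
    apply hone_ne
    have h2 := Units.inv_mul (B w)
    rw [h, mul_zero] at h2
    exact h2.symm
  have hcontA : Continuous fun w => ‖(A w : Matrix (Fin d) (Fin d) ℝ)‖ := hKA.continuous.norm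
  have hcontB : Continuous fun w => ‖(B w : Matrix (Fin d) (Fin d) ℝ)‖ := hKB.continuous.norm
  obtain ⟨wA, -, hwA'⟩ := isCompact_univ.exists_isMinOn (Set.univ_nonempty) hcontA.continuousOn
  obtain ⟨wB, -, hwB'⟩ := isCompact_univ.exists_isMinOn (Set.univ_nonempty) hcontB.continuousOn
  have hwA := fun w => isMinOn_iff.mp hwA' w (Set.mem_univ w)
  have hwB := fun w => isMinOn_iff.mp hwB' w (Set.mem_univ w)
  set mA := ‖(A wA : Matrix (Fin d) (Fin d) ℝ)‖ with hmA
  set mB := ‖(B wB : Matrix (Fin d) (Fin d) ℝ)‖ with hmB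
  have hmA0 : 0 < mA := norm_pos_iff.mpr (hAne wA)
  have hmB0 : 0 < mB := norm_pos_iff.mpr (hBne wB)
  have hJA : ∀ w, ‖(((A w)⁻¹ : GL (Fin d) ℝ) : Matrix (Fin d) (Fin d) ℝ)‖ ≤ C₃A * Real.exp θ / mA := by
    intro w
    have h1 := hFA' w 1
    rw [hc1A w] at h1
    have h2 : gnorm (A w) * gnorm ((A w)⁻¹) ≤ C₃A * Real.exp θ := by
      simpa using h1
    have h3 : mA ≤ gnorm (A w) := hwA w
    have h4 : (0:ℝ) ≤ gnorm ((A w)⁻¹) := norm_nonneg _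
    rw [le_div_iff₀ hmA0]
    show gnorm ((A w)⁻¹) * mA ≤ C₃A * Real.exp θ
    nlinarith only [h2, h3, h4, hmA0]
  have hJB : ∀ w, ‖(((B w)⁻¹ : GL (Fin d) ℝ) : Matrix (Fin d) (Fin d) ℝ)‖ ≤ C₃B * Real.exp θ / mB := by
    intro w
    have h1 := hFB' w 1
    rw [hc1B w] at h1
    have h2 : gnorm (B w) * gnorm ((B w)⁻¹) ≤ C₃B * Real.exp θ := by
      simpa using h1
    have h3 : mB ≤ gnorm (B w) := hwB w
    have h4 : (0:ℝ) ≤ gnorm ((B w)⁻¹) := norm_nonneg _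
    rw [le_div_iff₀ hmB0]
    show gnorm ((B w)⁻¹) * mB ≤ C₃B * Real.exp θ
    nlinarith only [h2, h3, h4, hmB0]
  set JA := C₃A * Real.exp θ / mA with hJAdef
  set JB := C₃B * Real.exp θ / mB with hJBdef
  set LA := JA * (KA : ℝ) with hLAdef
  set LB := JB * (KB : ℝ) with hLBdef
  have hJA0 : 0 ≤ JA := le_trans (norm_nonneg _) (hJA wA)
  have hJB0 : 0 ≤ JB := le_trans (norm_nonneg _) (hJB wB)
  have hLA0 : 0 ≤ LA := mul_nonneg hJA0 (KA.coe_nonneg)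
  have hLB0 : 0 ≤ LB := mul_nonneg hJB0 (KB.coe_nonneg)
  have hLA₁ := Stmt10Key.step_bound₁ A KA hKA JA hJA
  have hLA₂ := Stmt10Key.step_bound₂ A KA hKA JA hJA
  have hLB₁ := Stmt10Key.step_bound₁ B KB hKB JB hJB
  have hLB₂ := Stmt10Key.step_bound₂ B KB hKB JB hJB
  -- closing lemma constants
  set δ : ℝ := (lam - θ)/2 with hδdef
  have hδpos : 0 < δ := by rw [hδdef]; linarith only [hθ]
  have hθδ : θ + δ < lam := by rw [hδdef]; linarith only [hθ]
  have hθδ0 : 0 ≤ θ + δ := by linarith only [hδpos, hθ0]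
  obtain ⟨C₅, hC₅, ε₀, hε₀, hclose'⟩ := hclose δ hδpos hθδ
  -- exponential approach to x
  have hys' : Tendsto (fun n : ℕ => dist x ((⇑f)^[n] y)) atTop (𝓝 0) := by
    have h0 : (fun n : ℕ => dist x ((⇑f)^[n] y)) = fun n => dist ((⇑f)^[n] x) ((⇑f)^[n] y) := by
      funext n; rw [hxit n]
    rw [h0]; exact hys
  have hyu' : Tendsto (fun n : ℕ => dist x ((⇑f.symm)^[n] y)) atTop (𝓝 0) := by
    have h0 : (fun n : ℕ => dist x ((⇑f.symm)^[n] y)) = fun n => dist ((⇑f.symm)^[n] x) ((⇑f.symm)^[n] y) := by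
      funext n; rw [hxsit n]
    rw [h0]; exact hyu
  obtain ⟨Cs, hCs0, hCs⟩ := Stmt10Stable.exp_stable (⇑f) C₁ lam ε hf.C₁_pos hf.lam_pos
    hf.eps_pos hf.stable_contr x hx y hys'
  obtain ⟨Cu, hCu0, hCu⟩ := Stmt10Stable.exp_stable (⇑f.symm) C₁ lam ε hf.C₁_pos hf.lam_pos
    hf.eps_pos hf.unstable_contr x hxs y hyu'
  set Cxy := Cs + Cu with hCxy
  have hCxy0 : 0 ≤ Cxy := by rw [hCxy]; linarith only [hCs0, hCu0]
  set dcl : ℕ → ℝ := fun n => dist ((⇑f)^[n] y) ((⇑f.symm)^[n] y) with hdcl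
  have hdcl0 : ∀ n, 0 ≤ dcl n := fun n => dist_nonneg
  have hdclexp : ∀ n, dcl n ≤ Cxy * Real.exp (-lam * n) := by
    intro n
    have h1 := hCs n
    have h2 := hCu n
    rw [dist_comm] at h1
    calc dcl n ≤ dist ((⇑f)^[n] y) x + dist x ((⇑f.symm)^[n] y) := dist_triangle _ _ _
      _ ≤ Cs * Real.exp (-lam*n) + Cu * Real.exp (-lam*n) := add_le_add h1 h2
      _ = Cxy * Real.exp (-lam * n) := by rw [hCxy]; ring
  have hdclCxy : ∀ n, dcl n ≤ Cxy := by
    intro n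
    have h1 := hdclexp n
    have h2 : Real.exp (-lam * n) ≤ 1 := Real.exp_le_one_iff.mpr (by
      have h3 : (0:ℝ) ≤ (n:ℝ) := Nat.cast_nonneg n
      nlinarith only [h3, hf.lam_pos])
    nlinarith only [h1, h2, hCxy0]
  -- a little geometric convergence helper
  have hgeo : ∀ (c a : ℝ), 0 < a → Tendsto (fun n : ℕ => c * Real.exp (-a * n)) atTop (𝓝 0) := by
    intro c a ha
    have h1 : Tendsto (fun n : ℕ => Real.exp (-a * n)) atTop (𝓝 0) := by
      have heq : (fun n : ℕ => Real.exp (-a * n)) = fun n : ℕ => (Real.exp (-a))^n := by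
        funext n
        rw [← Real.exp_nat_mul]
        ring_nf
      rw [heq]
      exact tendsto_pow_atTop_nhds_zero_of_lt_one (Real.exp_pos _).le
        (Real.exp_lt_one_iff.mpr (by linarith only [ha]))
    have := h1.const_mul c
    simpa using this
  have hdcltend : Tendsto dcl atTop (𝓝 0) := squeeze_zero hdcl0 hdclexp (hgeo Cxy lam hf.lam_pos)
  -- main constants
  set C₃m := max (max C₃A C₃B) 1 with hC₃mdef
  have hC₃m1 : (1:ℝ) ≤ C₃m := le_max_right _ _
  have hC₃m0 : (0:ℝ) < C₃m := by linarith only [hC₃m1]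
  have hC₃mA : C₃A ≤ C₃m := le_trans (le_max_left _ _) (le_max_left _ _)
  have hC₃mB : C₃B ≤ C₃m := le_trans (le_max_right _ _) (le_max_left _ _)
  set Lm := max LA LB with hLmdef
  have hLm0 : 0 ≤ Lm := le_trans hLA0 (le_max_left _ _)
  have hLmA : LA ≤ Lm := le_max_left _ _
  have hLmB : LB ≤ Lm := le_max_right _ _
  set Cc := C₃m * Lm * C₅ with hCcdef
  have hCc0 : 0 ≤ Cc := by
    rw [hCcdef]
    exact mul_nonneg (mul_nonneg hC₃m0.le hLm0) hC₅.le
  set Sg : ℝ := (1 - Real.exp (-δ))⁻¹ with hSgdef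
  have hexpδ1 : Real.exp (-δ) < 1 := Real.exp_lt_one_iff.mpr (by linarith only [hδpos])
  have hSg0 : 0 < Sg := by rw [hSgdef]; exact inv_pos.mpr (by linarith only [hexpδ1])
  set Ψ : ℕ → ℝ := fun n => (Cc * dcl n) * Sg * Real.exp ((Cc * dcl n) * Sg) with hΨdef
  have hΨ0 : ∀ n, 0 ≤ Ψ n := by
    intro n
    simp only [hΨdef]
    exact mul_nonneg (mul_nonneg (mul_nonneg hCc0 (hdcl0 n)) hSg0.le) (Real.exp_pos _).le
  set Θ : ℕ → ℝ := fun n => C₃m * Real.exp (θ * n) * Ψ n with hΘdef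
  have hΘ0 : ∀ n, 0 ≤ Θ n := by
    intro n
    simp only [hΘdef]
    exact mul_nonneg (mul_nonneg hC₃m0.le (Real.exp_pos _).le) (hΨ0 n)
  have hΘtend : Tendsto Θ atTop (𝓝 0) := by
    set K0 := C₃m * Cc * Cxy * Sg * Real.exp (Cc * Cxy * Sg) with hK0def
    have hbound : ∀ n, Θ n ≤ K0 * Real.exp ((θ - lam) * n) := by
      intro n
      have h1 : dcl n ≤ Cxy * Real.exp (-lam * n) := hdclexp n
      have h2 : Cc * dcl n * Sg ≤ Cc * Cxy * Sg :=
        mul_le_mul_of_nonneg_right (mul_le_mul_of_nonneg_left (hdclCxy n) hCc0) hSg0.le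
      have h3 : Real.exp ((Cc * dcl n) * Sg) ≤ Real.exp (Cc * Cxy * Sg) := Real.exp_le_exp.mpr h2
      have h4 : Ψ n ≤ (Cc * (Cxy * Real.exp (-lam * n))) * Sg * Real.exp (Cc * Cxy * Sg) := by
        simp only [hΨdef]
        have hd := hdcl0 n
        have he := (Real.exp_pos ((Cc * dcl n) * Sg)).le
        apply mul_le_mul _ h3 he _
        · exact mul_le_mul_of_nonneg_right (mul_le_mul_of_nonneg_left h1 hCc0) hSg0.le
        · exact mul_nonneg (mul_nonneg hCc0 (mul_nonneg hCxy0 (Real.exp_pos _).le)) hSg0.le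
      calc Θ n ≤ C₃m * Real.exp (θ * n) * ((Cc * (Cxy * Real.exp (-lam * n))) * Sg * Real.exp (Cc * Cxy * Sg)) := by
            simp only [hΘdef]
            exact mul_le_mul_of_nonneg_left h4 (mul_nonneg hC₃m0.le (Real.exp_pos _).le)
        _ = K0 * (Real.exp (θ * n) * Real.exp (-lam * n)) := by rw [hK0def]; ring
        _ = K0 * Real.exp ((θ - lam) * n) := by rw [← Real.exp_add]; ring_nf
    have hK0tend : Tendsto (fun n : ℕ => K0 * Real.exp ((θ - lam) * n)) atTop (𝓝 0) := by
      have heq : (fun n : ℕ => K0 * Real.exp ((θ - lam) * n)) = fun n : ℕ => K0 * Real.exp (-(lam - θ) * n) := by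
        funext n; ring_nf
      rw [heq]
      exact hgeo K0 (lam - θ) (by linarith only [hθ])
    exact squeeze_zero hΘ0 hbound hK0tend
  set BS := ‖Ls‖ + 1 with hBSdef
  have hBS1 : (1:ℝ) ≤ BS := by
    have h := norm_nonneg Ls
    rw [hBSdef]; linarith only [h]
  have hBS0 : (0:ℝ) ≤ BS := by linarith only [hBS1]
  have hSbnd : ∀ᶠ n in atTop, ‖Sseq n‖ ≤ BS := by
    have h1 : Tendsto (fun n => ‖Sseq n‖) atTop (𝓝 ‖Ls‖) := hSlim.norm
    have h2 := h1.eventually_lt_const (show ‖Ls‖ < BS by rw [hBSdef]; linarith only [])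
    exact h2.mono fun n h => h.le
  -- the eventual estimate
  have hmain : ∀ᶠ n in atTop, ‖Useq n - Sseq n‖ ≤ 48 * BS * Θ n := by
    have hev1 : ∀ᶠ n : ℕ in atTop, 1 ≤ n := eventually_ge_atTop 1
    have hev2 : ∀ᶠ n in atTop, dcl n < ε₀ := hdcltend.eventually_lt_const hε₀
    have hev3 : ∀ᶠ n in atTop, Θ n ≤ 1/2 := by
      have := hΘtend.eventually_lt_const (show (0:ℝ) < 1/2 by norm_num)
      exact this.mono fun n h => h.le
    filter_upwards [hev1, hev2, hev3, hSbnd] with n hn1 hn2 hn3 hnS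
    -- CORE ARGUMENT
    set z := (⇑f.symm)^[n] y with hz
    have hfnz : (⇑f)^[n] z = y := by rw [hz]; exact Stmt10Aux2.iterate_iterate_symm f n y
    have hz2n : (⇑f)^[2*n] z = (⇑f)^[n] y := by
      rw [two_mul, Function.iterate_add_apply, hfnz]
    have hdz : dist ((⇑f)^[2*n] z) z < ε₀ := by
      rw [hz2n, hz]
      have := hn2
      simp only [hdcl] at this
      exact this
    obtain ⟨p, hp, hshadow⟩ := hclose' z (2*n) hdz
    set q := (⇑f)^[n] p with hq
    have hb2n : ∀ j ≤ 2*n, dist ((⇑f)^[j] z) ((⇑f)^[j] p) ≤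
        C₅ * Real.exp (-(θ+δ)*((min j (2*n-j) : ℕ) : ℝ)) * dcl n := by
      intro j hj
      have h := hshadow j hj
      rw [hz2n, hz] at h
      have hdd : dist ((⇑f)^[n] y) ((⇑f.symm)^[n] y) = dcl n := by simp only [hdcl]
      rw [hdd] at h
      exact h
    have hsh1 : ∀ j ≤ n, dist ((⇑f)^[j] z) ((⇑f)^[j] p) ≤ C₅ * Real.exp (-(θ+δ)*j) * dcl n := by
      intro j hj
      have h := hb2n j (by omega)
      rwa [Nat.min_eq_left (by omega : j ≤ 2*n - j)] at h
    have hsh2 : ∀ k, 1 ≤ k → k ≤ n →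
        dist ((⇑f)^[n-k] y) ((⇑f)^[2*n-k] p) ≤ C₅ * Real.exp (-(θ+δ)*k) * dcl n := by
      intro k hk1 hk2
      have h := hb2n (2*n - k) (by omega)
      rw [show 2*n - (2*n - k) = k by omega, Nat.min_eq_right (by omega : k ≤ 2*n - k)] at h
      have hzz : (⇑f)^[2*n-k] z = (⇑f)^[n-k] y := by
        rw [show 2*n-k = (n-k)+n by omega, Function.iterate_add_apply, hfnz]
      rwa [hzz] at h
    -- forward key estimates
    have hγ : ‖(((cocycle (⇑f) A n p)⁻¹ * cocycle (⇑f) A n z : GL (Fin d) ℝ) :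
        Matrix (Fin d) (Fin d) ℝ) - 1‖ ≤ Ψ n := by
      have hkey := Stmt10Key.key (⇑f) A z p n (Cc * dcl n) δ
        (mul_nonneg hCc0 (hdcl0 n)) hδpos ?_
      · simp only [hΨdef, hSgdef]
        exact hkey
      · intro j hj
        refine Stmt10Key.key_step_bound j (hFA' p j) (hLA₁ ((⇑f)^[j] z) ((⇑f)^[j] p))
          (hsh1 j hj.le) (norm_nonneg _) (norm_nonneg _) (norm_nonneg _) hLA0 hC₅.le
          (hdcl0 n) ?_ hC₃A
        calc C₃A * (LA * C₅) ≤ C₃m * (Lm * C₅) :=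
              mul_le_mul hC₃mA (mul_le_mul_of_nonneg_right hLmA hC₅.le)
                (mul_nonneg hLA0 hC₅.le) hC₃m0.le
          _ = Cc := by rw [hCcdef]; ring
    have hδB : ‖(((cocycle (⇑f) B n p)⁻¹ * cocycle (⇑f) B n z : GL (Fin d) ℝ) :
        Matrix (Fin d) (Fin d) ℝ) - 1‖ ≤ Ψ n := by
      have hkey := Stmt10Key.key (⇑f) B z p n (Cc * dcl n) δ
        (mul_nonneg hCc0 (hdcl0 n)) hδpos ?_
      · simp only [hΨdef, hSgdef]
        exact hkey
      · intro j hj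
        refine Stmt10Key.key_step_bound j (hFB' p j) (hLB₁ ((⇑f)^[j] z) ((⇑f)^[j] p))
          (hsh1 j hj.le) (norm_nonneg _) (norm_nonneg _) (norm_nonneg _) hLB0 hC₅.le
          (hdcl0 n) ?_ hC₃B
        calc C₃B * (LB * C₅) ≤ C₃m * (Lm * C₅) :=
              mul_le_mul hC₃mB (mul_le_mul_of_nonneg_right hLmB hC₅.le)
                (mul_nonneg hLB0 hC₅.le) hC₃m0.le
          _ = Cc := by rw [hCcdef]; ring
    -- backward key estimates
    have hsymp : (⇑f.symm)^[n] p = q := by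
      rw [Stmt10Aux2.iterate_symm_periodic f (by omega : n ≤ 2*n) hp, hq]
      congr 1
      omega
    have hα : ‖((cocycle (⇑f) A n q * (cocycle (⇑f) A n y)⁻¹ : GL (Fin d) ℝ) :
        Matrix (Fin d) (Fin d) ℝ) - 1‖ ≤ Ψ n := by
      have hkey := Stmt10Key.key (⇑f.symm) (Stmt10Aux2.rgen f A) ((⇑f)^[n] y) p n
        (Cc * dcl n) δ (mul_nonneg hCc0 (hdcl0 n)) hδpos ?_
      · have hid1 : (cocycle (⇑f.symm) (Stmt10Aux2.rgen f A) n p)⁻¹ = cocycle (⇑f) A n q := by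
          rw [Stmt10Aux2.cocycle_rgen, inv_inv, hsymp]
        have hid2 : cocycle (⇑f.symm) (Stmt10Aux2.rgen f A) n ((⇑f)^[n] y)
            = (cocycle (⇑f) A n y)⁻¹ := by
          rw [Stmt10Aux2.cocycle_rgen, Stmt10Aux2.iterate_symm_iterate]
        rw [hid1, hid2] at hkey
        simp only [hΨdef, hSgdef]
        exact hkey
      · intro j hj
        have hGP : gnorm (cocycle (⇑f.symm) (Stmt10Aux2.rgen f A) j p) *
            gnorm ((cocycle (⇑f.symm) (Stmt10Aux2.rgen f A) j p)⁻¹) ≤ C₃A * Real.exp (θ * j) := by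
          rw [Stmt10Aux2.cocycle_rgen, inv_inv]
          rw [mul_comm]
          exact hFA' ((⇑f.symm)^[j] p) j
        have hv : Stmt10Aux2.rgen f A ((⇑f.symm)^[j] p) = (A ((⇑f)^[2*n - (j+1)] p))⁻¹ := by
          show (A (f.symm ((⇑f.symm)^[j] p)))⁻¹ = _
          rw [← Function.iterate_succ_apply' (⇑f.symm) j p,
            Stmt10Aux2.iterate_symm_periodic f (by omega : j+1 ≤ 2*n) hp]
        have hu : Stmt10Aux2.rgen f A ((⇑f.symm)^[j] ((⇑f)^[n] y)) = (A ((⇑f)^[n - (j+1)] y))⁻¹ := by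
          show (A (f.symm ((⇑f.symm)^[j] ((⇑f)^[n] y))))⁻¹ = _
          rw [← Function.iterate_succ_apply' (⇑f.symm) j ((⇑f)^[n] y),
            Stmt10Aux2.iterate_symm_of_le f (by omega : j+1 ≤ n) y]
        have hstepel : ((Stmt10Aux2.rgen f A ((⇑f.symm)^[j] p))⁻¹ *
            Stmt10Aux2.rgen f A ((⇑f.symm)^[j] ((⇑f)^[n] y)) : GL (Fin d) ℝ)
            = A ((⇑f)^[2*n - (j+1)] p) * (A ((⇑f)^[n - (j+1)] y))⁻¹ := by
          rw [hv, hu, inv_inv]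
        have hE := hLA₂ ((⇑f)^[n - (j+1)] y) ((⇑f)^[2*n - (j+1)] p)
        have hdistb : dist ((⇑f)^[n - (j+1)] y) ((⇑f)^[2*n - (j+1)] p) ≤
            C₅ * Real.exp (-(θ+δ)*j) * dcl n := by
          have h1 := hsh2 (j+1) (by omega) (by omega)
          have h2 : Real.exp (-(θ+δ)*((j:ℝ)+1)) ≤ Real.exp (-(θ+δ)*j) := by
            apply Real.exp_le_exp.mpr
            linarith only [hθδ0]
          have h3 : ((j+1 : ℕ) : ℝ) = (j:ℝ)+1 := by push_cast; ring
          rw [h3] at h1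
          refine h1.trans ?_
          exact mul_le_mul_of_nonneg_right (mul_le_mul_of_nonneg_left h2 hC₅.le) (hdcl0 n)
        rw [hstepel]
        refine Stmt10Key.key_step_bound j hGP hE hdistb (norm_nonneg _) (norm_nonneg _)
          (norm_nonneg _) hLA0 hC₅.le (hdcl0 n) ?_ hC₃A
        calc C₃A * (LA * C₅) ≤ C₃m * (Lm * C₅) :=
              mul_le_mul hC₃mA (mul_le_mul_of_nonneg_right hLmA hC₅.le)
                (mul_nonneg hLA0 hC₅.le) hC₃m0.le
          _ = Cc := by rw [hCcdef]; ring
    have hβ : ‖((cocycle (⇑f) B n q * (cocycle (⇑f) B n y)⁻¹ : GL (Fin d) ℝ) :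
        Matrix (Fin d) (Fin d) ℝ) - 1‖ ≤ Ψ n := by
      have hkey := Stmt10Key.key (⇑f.symm) (Stmt10Aux2.rgen f B) ((⇑f)^[n] y) p n
        (Cc * dcl n) δ (mul_nonneg hCc0 (hdcl0 n)) hδpos ?_
      · have hid1 : (cocycle (⇑f.symm) (Stmt10Aux2.rgen f B) n p)⁻¹ = cocycle (⇑f) B n q := by
          rw [Stmt10Aux2.cocycle_rgen, inv_inv, hsymp]
        have hid2 : cocycle (⇑f.symm) (Stmt10Aux2.rgen f B) n ((⇑f)^[n] y)
            = (cocycle (⇑f) B n y)⁻¹ := by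
          rw [Stmt10Aux2.cocycle_rgen, Stmt10Aux2.iterate_symm_iterate]
        rw [hid1, hid2] at hkey
        simp only [hΨdef, hSgdef]
        exact hkey
      · intro j hj
        have hGP : gnorm (cocycle (⇑f.symm) (Stmt10Aux2.rgen f B) j p) *
            gnorm ((cocycle (⇑f.symm) (Stmt10Aux2.rgen f B) j p)⁻¹) ≤ C₃B * Real.exp (θ * j) := by
          rw [Stmt10Aux2.cocycle_rgen, inv_inv]
          rw [mul_comm]
          exact hFB' ((⇑f.symm)^[j] p) j
        have hv : Stmt10Aux2.rgen f B ((⇑f.symm)^[j] p) = (B ((⇑f)^[2*n - (j+1)] p))⁻¹ := by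
          show (B (f.symm ((⇑f.symm)^[j] p)))⁻¹ = _
          rw [← Function.iterate_succ_apply' (⇑f.symm) j p,
            Stmt10Aux2.iterate_symm_periodic f (by omega : j+1 ≤ 2*n) hp]
        have hu : Stmt10Aux2.rgen f B ((⇑f.symm)^[j] ((⇑f)^[n] y)) = (B ((⇑f)^[n - (j+1)] y))⁻¹ := by
          show (B (f.symm ((⇑f.symm)^[j] ((⇑f)^[n] y))))⁻¹ = _
          rw [← Function.iterate_succ_apply' (⇑f.symm) j ((⇑f)^[n] y),
            Stmt10Aux2.iterate_symm_of_le f (by omega : j+1 ≤ n) y]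
        have hstepel : ((Stmt10Aux2.rgen f B ((⇑f.symm)^[j] p))⁻¹ *
            Stmt10Aux2.rgen f B ((⇑f.symm)^[j] ((⇑f)^[n] y)) : GL (Fin d) ℝ)
            = B ((⇑f)^[2*n - (j+1)] p) * (B ((⇑f)^[n - (j+1)] y))⁻¹ := by
          rw [hv, hu, inv_inv]
        have hE := hLB₂ ((⇑f)^[n - (j+1)] y) ((⇑f)^[2*n - (j+1)] p)
        have hdistb : dist ((⇑f)^[n - (j+1)] y) ((⇑f)^[2*n - (j+1)] p) ≤
            C₅ * Real.exp (-(θ+δ)*j) * dcl n := by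
          have h1 := hsh2 (j+1) (by omega) (by omega)
          have h2 : Real.exp (-(θ+δ)*((j:ℝ)+1)) ≤ Real.exp (-(θ+δ)*j) := by
            apply Real.exp_le_exp.mpr
            linarith only [hθδ0]
          have h3 : ((j+1 : ℕ) : ℝ) = (j:ℝ)+1 := by push_cast; ring
          rw [h3] at h1
          refine h1.trans ?_
          exact mul_le_mul_of_nonneg_right (mul_le_mul_of_nonneg_left h2 hC₅.le) (hdcl0 n)
        rw [hstepel]
        refine Stmt10Key.key_step_bound j hGP hE hdistb (norm_nonneg _) (norm_nonneg _)
          (norm_nonneg _) hLB0 hC₅.le (hdcl0 n) ?_ hC₃B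
        calc C₃B * (LB * C₅) ≤ C₃m * (Lm * C₅) :=
              mul_le_mul hC₃mB (mul_le_mul_of_nonneg_right hLmB hC₅.le)
                (mul_nonneg hLB0 hC₅.le) hC₃m0.le
          _ = Cc := by rw [hCcdef]; ring
    -- periodic data
    have hperAB : cocycle (⇑f) A (2*n) p = cocycle (⇑f) B (2*n) p := hper p (2*n) (by omega) hp
    have hsplitA : cocycle (⇑f) A (2*n) p = cocycle (⇑f) A n q * cocycle (⇑f) A n p := by
      rw [two_mul, Stmt10Aux.cocycle_add, ← hq]
    have hsplitB : cocycle (⇑f) B (2*n) p = cocycle (⇑f) B n q * cocycle (⇑f) B n p := by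
      rw [two_mul, Stmt10Aux.cocycle_add, ← hq]
    have hΓid : ((cocycle (⇑f) A n q)⁻¹ * cocycle (⇑f) B n q : GL (Fin d) ℝ)
        = cocycle (⇑f) A n p * (cocycle (⇑f) B n p)⁻¹ := by
      have h := hperAB
      rw [hsplitA, hsplitB] at h
      have h2 : ((cocycle (⇑f) A n q)⁻¹ * (cocycle (⇑f) A n q * cocycle (⇑f) A n p) *
          (cocycle (⇑f) B n p)⁻¹ : GL (Fin d) ℝ)
          = (cocycle (⇑f) A n q)⁻¹ * (cocycle (⇑f) B n q * cocycle (⇑f) B n p) *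
          (cocycle (⇑f) B n p)⁻¹ := by rw [h]
      simp only [mul_assoc, inv_mul_cancel_left, mul_inv_cancel, mul_one] at h2
      exact h2.symm
    -- the decomposition elements
    set ΓGL : GL (Fin d) ℝ := (cocycle (⇑f) A n q)⁻¹ * cocycle (⇑f) B n q with hΓGL
    set aGL : GL (Fin d) ℝ := (cocycle (⇑f) A n q)⁻¹ *
      (cocycle (⇑f) A n q * (cocycle (⇑f) A n y)⁻¹) * cocycle (⇑f) A n q with haGL
    set b'GL : GL (Fin d) ℝ := (cocycle (⇑f) B n q)⁻¹ *
      (cocycle (⇑f) B n q * (cocycle (⇑f) B n y)⁻¹) * cocycle (⇑f) B n q with hb'GL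
    set cGL : GL (Fin d) ℝ := cocycle (⇑f) A n p *
      ((cocycle (⇑f) A n p)⁻¹ * cocycle (⇑f) A n z) * (cocycle (⇑f) A n p)⁻¹ with hcGL
    set e'GL : GL (Fin d) ℝ := cocycle (⇑f) B n p *
      ((cocycle (⇑f) B n p)⁻¹ * cocycle (⇑f) B n z) * (cocycle (⇑f) B n p)⁻¹ with he'GL
    have hSdec : ((cocycle (⇑f) A n y)⁻¹ * cocycle (⇑f) B n y : GL (Fin d) ℝ)
        = aGL * ΓGL * (b'GL)⁻¹ := by
      rw [haGL, hΓGL, hb'GL]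
      group
    have hUdec : (cocycle (⇑f) A n z * (cocycle (⇑f) B n z)⁻¹ : GL (Fin d) ℝ)
        = cGL * ΓGL * (e'GL)⁻¹ := by
      rw [hcGL, he'GL, hΓid]
      group
    -- norm bounds for the conjugated elements
    have hcombA : C₃A * Real.exp (θ * n) * Ψ n ≤ Θ n := by
      simp only [hΘdef]
      exact mul_le_mul_of_nonneg_right
        (mul_le_mul_of_nonneg_right hC₃mA (Real.exp_pos _).le) (hΨ0 n)
    have hcombB : C₃B * Real.exp (θ * n) * Ψ n ≤ Θ n := by
      simp only [hΘdef]
      exact mul_le_mul_of_nonneg_right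
        (mul_le_mul_of_nonneg_right hC₃mB (Real.exp_pos _).le) (hΨ0 n)
    have hna : ‖(aGL : Matrix (Fin d) (Fin d) ℝ) - 1‖ ≤ Θ n := by
      rw [haGL]
      refine (Stmt10Key.conj_norm_bound _ _).trans ?_
      refine le_trans ?_ hcombA
      refine le_trans (mul_le_mul_of_nonneg_left hα
        (mul_nonneg (norm_nonneg _) (norm_nonneg _))) ?_
      exact mul_le_mul_of_nonneg_right (hFA' q n) (hΨ0 n)
    have hnb' : ‖(b'GL : Matrix (Fin d) (Fin d) ℝ) - 1‖ ≤ Θ n := by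
      rw [hb'GL]
      refine (Stmt10Key.conj_norm_bound _ _).trans ?_
      refine le_trans ?_ hcombB
      refine le_trans (mul_le_mul_of_nonneg_left hβ
        (mul_nonneg (norm_nonneg _) (norm_nonneg _))) ?_
      exact mul_le_mul_of_nonneg_right (hFB' q n) (hΨ0 n)
    have hnc : ‖(cGL : Matrix (Fin d) (Fin d) ℝ) - 1‖ ≤ Θ n := by
      rw [hcGL]
      refine (Stmt10Key.conj_norm_bound' _ _).trans ?_
      refine le_trans ?_ hcombA
      refine le_trans (mul_le_mul_of_nonneg_left hγ
        (mul_nonneg (norm_nonneg _) (norm_nonneg _))) ?_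
      exact mul_le_mul_of_nonneg_right (hFA' p n) (hΨ0 n)
    have hne' : ‖(e'GL : Matrix (Fin d) (Fin d) ℝ) - 1‖ ≤ Θ n := by
      rw [he'GL]
      refine (Stmt10Key.conj_norm_bound' _ _).trans ?_
      refine le_trans ?_ hcombB
      refine le_trans (mul_le_mul_of_nonneg_left hδB
        (mul_nonneg (norm_nonneg _) (norm_nonneg _))) ?_
      exact mul_le_mul_of_nonneg_right (hFB' p n) (hΨ0 n)
    -- inverses are close to 1 too
    have hnbinv : ‖(((b'GL)⁻¹ : GL (Fin d) ℝ) : Matrix (Fin d) (Fin d) ℝ) - 1‖ ≤ 2 * Θ n := by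
      have h1 := Stmt10Key.inv_near_one b'GL (hnb'.trans hn3)
      linarith only [h1, hnb']
    have hneinv : ‖(((e'GL)⁻¹ : GL (Fin d) ℝ) : Matrix (Fin d) (Fin d) ℝ) - 1‖ ≤ 2 * Θ n := by
      have h1 := Stmt10Key.inv_near_one e'GL (hne'.trans hn3)
      linarith only [h1, hne']
    have hnainv : ‖(((aGL)⁻¹ : GL (Fin d) ℝ) : Matrix (Fin d) (Fin d) ℝ) - 1‖ ≤ 2 * Θ n := by
      have h1 := Stmt10Key.inv_near_one aGL (hna.trans hn3)
      linarith only [h1, hna]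
    -- bound on Γ
    have hSn : Sseq n = (aGL : Matrix (Fin d) (Fin d) ℝ) * (ΓGL : Matrix (Fin d) (Fin d) ℝ) *
        (((b'GL)⁻¹ : GL (Fin d) ℝ) : Matrix (Fin d) (Fin d) ℝ) := by
      simp only [hSseq]
      rw [hSdec, Units.val_mul, Units.val_mul]
    have hUn : Useq n = (cGL : Matrix (Fin d) (Fin d) ℝ) * (ΓGL : Matrix (Fin d) (Fin d) ℝ) *
        (((e'GL)⁻¹ : GL (Fin d) ℝ) : Matrix (Fin d) (Fin d) ℝ) := by
      simp only [hUseq]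
      rw [← hz, hUdec, Units.val_mul, Units.val_mul]
    have hnΓ : ‖(ΓGL : Matrix (Fin d) (Fin d) ℝ)‖ ≤ 4 * BS := by
      have hΓeq : ΓGL = (aGL)⁻¹ * ((cocycle (⇑f) A n y)⁻¹ * cocycle (⇑f) B n y) * b'GL := by
        rw [hSdec]
        group
      have hcoe : (ΓGL : Matrix (Fin d) (Fin d) ℝ) =
          (((aGL)⁻¹ : GL (Fin d) ℝ) : Matrix (Fin d) (Fin d) ℝ) * Sseq n *
          (b'GL : Matrix (Fin d) (Fin d) ℝ) := by
        rw [hΓeq, Units.val_mul, Units.val_mul]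
      rw [hcoe]
      have n1 : ‖(((aGL)⁻¹ : GL (Fin d) ℝ) : Matrix (Fin d) (Fin d) ℝ)‖ ≤ 2 := by
        refine (Stmt10Key.norm_le_one_add _).trans ?_
        linarith only [hnainv, hn3]
      have n2 : ‖(b'GL : Matrix (Fin d) (Fin d) ℝ)‖ ≤ 2 := by
        refine (Stmt10Key.norm_le_one_add _).trans ?_
        linarith only [hnb', hn3]
      calc ‖_ * Sseq n * _‖ ≤ ‖(((aGL)⁻¹ : GL (Fin d) ℝ) : Matrix (Fin d) (Fin d) ℝ) * Sseq n‖ *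
            ‖(b'GL : Matrix (Fin d) (Fin d) ℝ)‖ := norm_mul_le _ _
        _ ≤ ‖(((aGL)⁻¹ : GL (Fin d) ℝ) : Matrix (Fin d) (Fin d) ℝ)‖ * ‖Sseq n‖ *
            ‖(b'GL : Matrix (Fin d) (Fin d) ℝ)‖ :=
            mul_le_mul_of_nonneg_right (norm_mul_le _ _) (norm_nonneg _)
        _ ≤ 2 * BS * 2 := by
            apply mul_le_mul _ n2 (norm_nonneg _) (by linarith only [hBS0])
            exact mul_le_mul n1 hnS (norm_nonneg _) (by norm_num)
        _ = 4 * BS := by ring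
    -- final estimate
    rw [hUn, hSn]
    set aM := (aGL : Matrix (Fin d) (Fin d) ℝ) with haM
    set bM := (((b'GL)⁻¹ : GL (Fin d) ℝ) : Matrix (Fin d) (Fin d) ℝ) with hbM
    set cM := (cGL : Matrix (Fin d) (Fin d) ℝ) with hcM
    set eM := (((e'GL)⁻¹ : GL (Fin d) ℝ) : Matrix (Fin d) (Fin d) ℝ) with heM
    set ΓM := (ΓGL : Matrix (Fin d) (Fin d) ℝ) with hΓM
    have hsplit : cM * ΓM * eM - aM * ΓM * bM = (cM - aM) * ΓM * eM + aM * ΓM * (eM - bM) := by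
      noncomm_ring
    have nca : ‖cM - aM‖ ≤ 2 * Θ n := by
      have h1 : cM - aM = (cM - 1) - (aM - 1) := by abel
      rw [h1]
      refine (norm_sub_le _ _).trans ?_
      linarith only [hnc, hna]
    have neb : ‖eM - bM‖ ≤ 4 * Θ n := by
      have h1 : eM - bM = (eM - 1) - (bM - 1) := by abel
      rw [h1]
      refine (norm_sub_le _ _).trans ?_
      linarith only [hneinv, hnbinv]
    have ne2 : ‖eM‖ ≤ 2 := by
      refine (Stmt10Key.norm_le_one_add _).trans ?_
      linarith only [hneinv, hn3]
    have na2 : ‖aM‖ ≤ 2 := by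
      refine (Stmt10Key.norm_le_one_add _).trans ?_
      linarith only [hna, hn3]
    have hΘn0 := hΘ0 n
    calc ‖cM * ΓM * eM - aM * ΓM * bM‖
        = ‖(cM - aM) * ΓM * eM + aM * ΓM * (eM - bM)‖ := by rw [hsplit]
      _ ≤ ‖(cM - aM) * ΓM * eM‖ + ‖aM * ΓM * (eM - bM)‖ := norm_add_le _ _
      _ ≤ ‖cM - aM‖ * ‖ΓM‖ * ‖eM‖ + ‖aM‖ * ‖ΓM‖ * ‖eM - bM‖ := by
          apply add_le_add
          · exact le_trans (norm_mul_le _ _)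
              (mul_le_mul_of_nonneg_right (norm_mul_le _ _) (norm_nonneg _))
          · exact le_trans (norm_mul_le _ _)
              (mul_le_mul_of_nonneg_right (norm_mul_le _ _) (norm_nonneg _))
      _ ≤ (2 * Θ n) * (4 * BS) * 2 + 2 * (4 * BS) * (4 * Θ n) := by
          apply add_le_add
          · apply mul_le_mul _ ne2 (norm_nonneg _)
              (mul_nonneg (by linarith only [hΘn0]) (by linarith only [hBS0]))
            exact mul_le_mul nca hnΓ (norm_nonneg _) (by linarith only [hΘn0])
          · apply mul_le_mul _ neb (norm_nonneg _)
              (mul_nonneg (by norm_num) (by linarith only [hBS0]))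
            exact mul_le_mul na2 hnΓ (norm_nonneg _) (by norm_num)
      _ = 48 * BS * Θ n := by ring
  -- conclude
  have hdiff0 : Tendsto (fun n => Useq n - Sseq n) atTop (𝓝 0) := by
    apply squeeze_zero_norm' hmain
    have := hΘtend.const_mul (48 * BS)
    simpa using this
  have hsub : Tendsto (fun n => Useq n - Sseq n) atTop (𝓝 (Lu - Ls)) := hUlim.sub hSlim
  have hLuLs : Lu - Ls = 0 := tendsto_nhds_unique hsub hdiff0
  have hfin : Ls = Lu := (sub_eq_zero.mp hLuLs).symm
  refine Units.ext ?_
  rw [Units.val_mul, Units.val_mul]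
  rw [← hLs, ← hLu]
  exact hfin

end
end
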